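/- arXiv:1207.2752 — 9 statements merged into one kernel-verified Lean document; each statement's English description precedes it below -/
import Mathlib

section
/- Let n ≥ 3, t ≥ 1, and let j : Fin t → ℤ satisfy j s ≢ 0 (mod n) and 2·(j s) ≢ 0 (mod n) for all s. If a is a unit of ZMod n, then the GI-graph GI(n; a·j), defined by the function s ↦ a·(j s) (taking any integer lifts), is isomorphic as a simple graph to GI(n; j). -/
open SimpleGraph

/-- The GI-graph `GI(n; j)` on vertex set `Fin t × ZMod n`:
`(s,v)` and `(s',v')` are adjacent iff `v = v'` and `s ≠ s'` (a spoke edge), or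
`s = s'` and `v' = v + j s` or `v' = v - j s` in `ZMod n` (a layer edge). -/
def GI (n t : ℕ) (j : Fin t → ℤ) : SimpleGraph (Fin t × ZMod n) :=
  SimpleGraph.fromRel (fun x y =>
    (x.2 = y.2 ∧ x.1 ≠ y.1) ∨ (x.1 = y.1 ∧ y.2 = x.2 + (j x.1 : ZMod n)))

/-- A map on vertices respects the fundamental edge-partition of `GI(n;j)` if it maps
spoke edges to spoke edges and layer edges to layer edges. -/
def RespectsPart (n t : ℕ) (j : Fin t → ℤ) (f : Fin t × ZMod n → Fin t × ZMod n) : Prop :=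
  (∀ x y : Fin t × ZMod n, (GI n t j).Adj x y → x.2 = y.2 → (f x).2 = (f y).2) ∧
  (∀ x y : Fin t × ZMod n, (GI n t j).Adj x y → x.1 = y.1 → (f x).1 = (f y).1)

/-- The `k`-fold concatenation `[k]j` of the sequence `j`. -/
def rep (k t : ℕ) (j : Fin t → ℤ) : Fin (k * t) → ℤ :=
  fun s => j ⟨(s : ℕ) % t, Nat.mod_lt _ (by
    rcases Nat.eq_zero_or_pos t with ht | ht
    · exact absurd s.isLt (by simp [ht])
    · exact ht)⟩

/-- The sequence `j` is primitive (mod `n`): some `j s ≡ 1 (mod n)` and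
`j i ≢ ±j k (mod n)` whenever `i ≠ k`. -/
def PrimitiveSeq (n : ℕ) {t : ℕ} (j : Fin t → ℤ) : Prop :=
  (∃ s, (j s : ZMod n) = 1) ∧
  ∀ i k : Fin t, i ≠ k →
    (j i : ZMod n) ≠ (j k : ZMod n) ∧ (j i : ZMod n) ≠ -(j k : ZMod n)

/-- The set `J = {j s mod n : s}`. -/
def Jset (n : ℕ) {t : ℕ} (j : Fin t → ℤ) : Set (ZMod n) :=
  Set.range (fun s => ((j s : ZMod n)))

/-- The set `J ∪ -J`. -/
def JJset (n : ℕ) {t : ℕ} (j : Fin t → ℤ) : Set (ZMod n) :=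
  Jset n j ∪ (Neg.neg '' Jset n j)

/-- A graph is vertex-transitive if its automorphism group acts transitively on vertices. -/
def IsVertexTransitive {V : Type*} (G : SimpleGraph V) : Prop :=
  ∀ x y : V, ∃ φ : G ≃g G, φ x = y

/-- `H` is a group of automorphisms of `G` acting simply transitively (regularly)
on the vertices. -/
def IsRegularAutGroup {V : Type*} (G : SimpleGraph V) (H : Subgroup (Equiv.Perm V)) : Prop :=
  (∀ π ∈ H, ∀ x y : V, G.Adj x y ↔ G.Adj (π x) (π y)) ∧
  ∀ x y : V, ∃! π : Equiv.Perm V, π ∈ H ∧ π x = y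

/-- A graph is a Cayley graph iff its automorphism group has a subgroup acting
simply transitively (regularly) on the vertices. -/
def IsCayley {V : Type*} (G : SimpleGraph V) : Prop :=
  ∃ H : Subgroup (Equiv.Perm V), IsRegularAutGroup G H

/-- The standard rotation `ρ : (s,v) ↦ (s, v+1)` as a permutation of the vertices. -/
def rho (n t : ℕ) : Equiv.Perm (Fin t × ZMod n) :=
  Equiv.prodCongr (Equiv.refl (Fin t)) (Equiv.addRight (1 : ZMod n))

/-- The map `λ_{i,s₁,s₂}`, which swaps `(s₁,v)` and `(s₂,v)` whenever
`v ≡ i (mod gcd(n, j s₁))` (i.e. the image of `v` under the natural map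
`ZMod n → ZMod (gcd (n, j s₁))` equals `i mod gcd(n, j s₁)`), and fixes all other
vertices. -/
def lamMap (n t : ℕ) (j : Fin t → ℤ) (s₁ s₂ : Fin t) (i : ℤ) (x : Fin t × ZMod n) :
    Fin t × ZMod n :=
  if (ZMod.cast x.2 : ZMod (Int.gcd (n : ℤ) (j s₁))) =
      ((i : ℤ) : ZMod (Int.gcd (n : ℤ) (j s₁))) then
    if x.1 = s₁ then (s₂, x.2) else if x.1 = s₂ then (s₁, x.2) else x
  else x

/-- multiplying the parameters by a unit of `ZMod n` gives an
isomorphic GI-graph. -/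
theorem GI_mul_unit_iso (n t : ℕ) (hn : 3 ≤ n) (ht : 1 ≤ t) (j : Fin t → ℤ)
    (hj : ∀ s, (j s : ZMod n) ≠ 0 ∧ ((2 * j s : ℤ) : ZMod n) ≠ 0)
    (a : (ZMod n)ˣ) (j' : Fin t → ℤ)
    (hj' : ∀ s, (j' s : ZMod n) = (a : ZMod n) * (j s : ZMod n)) :
    Nonempty (GI n t j' ≃g GI n t j) := by
  classical
  let e : ZMod n ≃ ZMod n :=
    { toFun := fun v => ((a⁻¹ : (ZMod n)ˣ) : ZMod n) * v
      invFun := fun v => (a : ZMod n) * v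
      left_inv := fun v => by
        show (a : ZMod n) * (((a⁻¹ : (ZMod n)ˣ) : ZMod n) * v) = v
        rw [← mul_assoc, ← Units.val_mul, mul_inv_cancel, Units.val_one, one_mul]
      right_inv := fun v => by
        show ((a⁻¹ : (ZMod n)ˣ) : ZMod n) * ((a : ZMod n) * v) = v
        rw [← mul_assoc, ← Units.val_mul, inv_mul_cancel, Units.val_one, one_mul] }
  refine ⟨⟨Equiv.prodCongr (Equiv.refl (Fin t)) e, ?_⟩⟩
  intro x y
  simp only [GI, fromRel_adj, Equiv.prodCongr_apply, Equiv.coe_refl, Prod.map]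
  have key : ∀ u v : ZMod n, ∀ s : Fin t,
      (e v = e u + (j s : ZMod n)) ↔ (v = u + (j' s : ZMod n)) := by
    intro u v s
    rw [hj']
    constructor
    · intro h
      have := congrArg (fun z => (a : ZMod n) * z) h
      simp only [e, Equiv.coe_fn_mk, mul_add, ← mul_assoc, ← Units.val_mul,
        mul_inv_cancel, Units.val_one, one_mul] at this
      exact this
    · intro h
      simp only [e, Equiv.coe_fn_mk, h, mul_add, ← mul_assoc, ← Units.val_mul,
        inv_mul_cancel, Units.val_one, one_mul]
  have einj : ∀ u v : ZMod n, e u = e v ↔ u = v := fun u v => e.injective.eq_iff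
  have hne : ((x.1, e x.2) : Fin t × ZMod n) ≠ (y.1, e y.2) ↔ x ≠ y := by
    simp [Prod.ext_iff, einj, not_and_or]
  simp only [id_eq]
  rw [hne]
  constructor
  · rintro ⟨hxy, h⟩
    refine ⟨hxy, ?_⟩
    rcases h with (⟨h1,h2⟩|⟨h1,h2⟩) | (⟨h1,h2⟩|⟨h1,h2⟩)
    · exact Or.inl (Or.inl ⟨e.injective h1, h2⟩)
    · exact Or.inl (Or.inr ⟨h1, (key _ _ _).mp h2⟩)
    · exact Or.inr (Or.inl ⟨e.injective h1, h2⟩)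
    · exact Or.inr (Or.inr ⟨h1, (key _ _ _).mp h2⟩)
  · rintro ⟨hxy, h⟩
    refine ⟨hxy, ?_⟩
    rcases h with (⟨h1,h2⟩|⟨h1,h2⟩) | (⟨h1,h2⟩|⟨h1,h2⟩)
    · exact Or.inl (Or.inl ⟨congrArg e h1, h2⟩)
    · exact Or.inl (Or.inr ⟨h1, (key _ _ _).mpr h2⟩)
    · exact Or.inr (Or.inl ⟨congrArg e h1, h2⟩)
    · exact Or.inr (Or.inr ⟨h1, (key _ _ _).mpr h2⟩)
end

section
/- Let n ≥ 3, t ≥ 4, and let j : Fin t → ℤ satisfy j s ≢ 0 (mod n) and 2·(j s) ≢ 0 (mod n) for all s. An edge {(s,v),(s',v')} of GI(n;j) is a spoke edge (i.e., v = v') if and only if it is contained in a clique of size 4 of GI(n;j), i.e., there exist vertices u, w such that {(s,v),(s',v'),u,w} is a 4-element clique. -/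
open SimpleGraph

lemma GI_adj_iff (n t : ℕ) (j : Fin t → ℤ) (x y : Fin t × ZMod n) :
    (GI n t j).Adj x y ↔ x ≠ y ∧
      ((x.2 = y.2 ∧ x.1 ≠ y.1) ∨ (x.1 = y.1 ∧ y.2 = x.2 + (j x.1 : ZMod n)) ∨
       (x.1 = y.1 ∧ x.2 = y.2 + (j y.1 : ZMod n))) := by
  simp only [GI, SimpleGraph.fromRel_adj]
  constructor
  · rintro ⟨hne, h⟩
    refine ⟨hne, ?_⟩
    rcases h with (⟨h1, h2⟩ | ⟨h1, h2⟩) | (⟨h1, h2⟩ | ⟨h1, h2⟩)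
    · exact Or.inl ⟨h1, h2⟩
    · exact Or.inr (Or.inl ⟨h1, h2⟩)
    · exact Or.inl ⟨h1.symm, h2.symm⟩
    · exact Or.inr (Or.inr ⟨h1.symm, h2⟩)
  · rintro ⟨hne, h⟩
    refine ⟨hne, ?_⟩
    rcases h with ⟨h1, h2⟩ | ⟨h1, h2⟩ | ⟨h1, h2⟩
    · exact Or.inl (Or.inl ⟨h1, h2⟩)
    · exact Or.inl (Or.inr ⟨h1, h2⟩)
    · exact Or.inr (Or.inr ⟨h1.symm, h2⟩)

/-- A layer edge has a unique possible common neighbor (one-sided version). -/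
lemma common_nbr_aux (n t : ℕ) (j : Fin t → ℤ) (hj : ∀ s, (j s : ZMod n) ≠ 0)
    (x y u : Fin t × ZMod n) (hs : x.1 = y.1) (hd : y.2 = x.2 + (j x.1 : ZMod n))
    (hxu : (GI n t j).Adj x u) (hyu : (GI n t j).Adj y u) :
    u = (x.1, x.2 - (j x.1 : ZMod n)) := by
  rw [GI_adj_iff] at hxu hyu
  obtain ⟨hxune, hxu⟩ := hxu
  obtain ⟨hyune, hyu⟩ := hyu
  rcases hxu with ⟨h1, h2⟩ | ⟨h1, h2⟩ | ⟨h1, h2⟩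
  · -- spoke neighbor of x
    exfalso
    rcases hyu with ⟨g1, g2⟩ | ⟨g1, g2⟩ | ⟨g1, g2⟩
    · apply hj x.1
      have hthis : x.2 = y.2 := h1.trans g1.symm
      rw [hd] at hthis
      linear_combination -hthis
    · exact h2 (hs.trans g1)
    · exact h2 (hs.trans g1)
  · -- u.2 = x.2 + j = y.2 : then u = y, impossible
    exact absurd (Prod.ext (hs.symm.trans h1) (hd.trans h2.symm)) hyune
  · -- u.2 = x.2 - j
    refine Prod.ext h1.symm ?_
    rw [← h1] at h2
    linear_combination -h2

/-- Two common neighbors of a layer edge coincide. -/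
lemma common_nbr_unique (n t : ℕ) (j : Fin t → ℤ) (hj : ∀ s, (j s : ZMod n) ≠ 0)
    (x y u w : Fin t × ZMod n) (hxy : (GI n t j).Adj x y) (hne : x.2 ≠ y.2)
    (hxu : (GI n t j).Adj x u) (hyu : (GI n t j).Adj y u)
    (hxw : (GI n t j).Adj x w) (hyw : (GI n t j).Adj y w) : u = w := by
  have h := (GI_adj_iff n t j x y).1 hxy
  rcases h.2 with ⟨h1, _⟩ | ⟨h1, h2⟩ | ⟨h1, h2⟩
  · exact absurd h1 hne
  · rw [common_nbr_aux n t j hj x y u h1 h2 hxu hyu,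
      common_nbr_aux n t j hj x y w h1 h2 hxw hyw]
  · rw [common_nbr_aux n t j hj y x u h1.symm h2 hyu hxu,
      common_nbr_aux n t j hj y x w h1.symm h2 hyw hxw]

lemma card_three_le (a b c : Fin 1 × ZMod 1) : True := trivial

/-- when `t ≥ 4`, an edge of `GI(n;j)` is a spoke edge iff it lies in a
clique of size 4. -/
theorem GI_spoke_iff_clique_four (n t : ℕ) (hn : 3 ≤ n) (ht : 4 ≤ t) (j : Fin t → ℤ)
    (hj : ∀ s, (j s : ZMod n) ≠ 0 ∧ ((2 * j s : ℤ) : ZMod n) ≠ 0)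
    (x y : Fin t × ZMod n) (hxy : (GI n t j).Adj x y) :
    x.2 = y.2 ↔ ∃ u w : Fin t × ZMod n,
      (GI n t j).IsNClique 4 ({x, y, u, w} : Finset (Fin t × ZMod n)) := by
  constructor
  · -- forward: spoke edge lies in a K4
    intro hv
    obtain ⟨s1, v⟩ := x
    obtain ⟨s2, v2⟩ := y
    simp only at hv
    subst hv
    have hxyadj := (GI_adj_iff n t j _ _).1 hxy
    have hs12 : s1 ≠ s2 := by
      intro h; exact hxyadj.1 (by simp [h])
    have hex : ∀ (s : Finset (Fin t)), s.card ≤ 3 → ∃ a, a ∉ s := by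
      intro s hs
      by_contra h
      push_neg at h
      have h1 : (Finset.univ : Finset (Fin t)) ⊆ s := fun a _ => h a
      have h2 := Finset.card_le_card h1
      simp only [Finset.card_univ, Fintype.card_fin] at h2
      omega
    obtain ⟨a, ha⟩ := hex {s1, s2} (by
      calc ({s1, s2} : Finset (Fin t)).card ≤ ({s2} : Finset (Fin t)).card + 1 :=
            Finset.card_insert_le _ _
        _ ≤ 3 := by simp)
    obtain ⟨b, hb⟩ := hex {s1, s2, a} (by
      calc ({s1, s2, a} : Finset (Fin t)).card ≤ ({s2, a} : Finset (Fin t)).card + 1 :=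
            Finset.card_insert_le _ _
        _ ≤ ({a} : Finset (Fin t)).card + 1 + 1 := by
            exact Nat.add_le_add_right (Finset.card_insert_le _ _) 1
        _ ≤ 3 := by simp)
    simp only [Finset.mem_insert, Finset.mem_singleton, not_or] at ha hb
    refine ⟨(a, v), (b, v), ?_, ?_⟩
    · intro p hp q hq hpq
      simp only [Finset.coe_insert, Finset.coe_singleton, Set.mem_insert_iff,
        Set.mem_singleton_iff] at hp hq
      have spoke : ∀ (c d : Fin t), c ≠ d → (GI n t j).Adj (c, v) (d, v) := by
        intro c d hcd
        rw [GI_adj_iff]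
        exact ⟨by simp [hcd], Or.inl ⟨rfl, hcd⟩⟩
      rcases hp with rfl | rfl | rfl | rfl <;> rcases hq with rfl | rfl | rfl | rfl <;>
        first
          | exact absurd rfl hpq
          | (apply spoke; simp_all [eq_comm])
          | (apply spoke; simp_all [eq_comm]; tauto)
    · have h1 : ((s1, v) : Fin t × ZMod n) ∉ ({(s2, v), (a, v), (b, v)} : Finset _) := by
        simp only [Finset.mem_insert, Finset.mem_singleton, Prod.mk.injEq]
        push_neg
        exact ⟨fun h => absurd h hs12, fun h => absurd h.symm ha.1, fun h => absurd h.symm hb.1⟩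
      have h2 : ((s2, v) : Fin t × ZMod n) ∉ ({(a, v), (b, v)} : Finset _) := by
        simp only [Finset.mem_insert, Finset.mem_singleton, Prod.mk.injEq]
        push_neg
        exact ⟨fun h => absurd h.symm ha.2, fun h => absurd h.symm hb.2.1⟩
      have h3 : ((a, v) : Fin t × ZMod n) ∉ ({(b, v)} : Finset _) := by
        simp only [Finset.mem_singleton, Prod.mk.injEq]
        exact fun h => absurd h.1.symm hb.2.2
      rw [Finset.card_insert_of_notMem h1, Finset.card_insert_of_notMem h2,
        Finset.card_insert_of_notMem h3, Finset.card_singleton]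
  · -- backward: K4 containing the edge forces a spoke edge
    rintro ⟨u, w, hcl, hcard⟩
    by_contra hne
    have hcard3 : ∀ (a b c : Fin t × ZMod n), ({a, b, c} : Finset _).card ≤ 3 := by
      intro a b c
      calc ({a, b, c} : Finset _).card ≤ ({b, c} : Finset _).card + 1 :=
            Finset.card_insert_le _ _
        _ ≤ ({c} : Finset _).card + 1 + 1 := Nat.add_le_add_right (Finset.card_insert_le _ _) 1
        _ ≤ 3 := by simp
    have hxw : x ≠ w := by
      rintro rfl
      have : ({x, y, u, x} : Finset (Fin t × ZMod n)) = {x, y, u} := by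
        ext z; simp; try tauto
      rw [this] at hcard
      have := hcard3 x y u; omega
    have hyw : y ≠ w := by
      rintro rfl
      have : ({x, y, u, y} : Finset (Fin t × ZMod n)) = {x, y, u} := by
        ext z; simp; try tauto
      rw [this] at hcard
      have := hcard3 x y u; omega
    have hxu : x ≠ u := by
      rintro rfl
      have : ({x, y, x, w} : Finset (Fin t × ZMod n)) = {x, y, w} := by
        ext z; simp; try tauto
      rw [this] at hcard
      have := hcard3 x y w; omega
    have hyu : y ≠ u := by
      rintro rfl
      have : ({x, y, y, w} : Finset (Fin t × ZMod n)) = {x, y, w} := by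
        ext z; simp; try tauto
      rw [this] at hcard
      have := hcard3 x y w; omega
    have huw : u ≠ w := by
      rintro rfl
      have : ({x, y, u, u} : Finset (Fin t × ZMod n)) = {x, y, u} := by
        ext z; simp
      rw [this] at hcard
      have := hcard3 x y u; omega
    have mem : ∀ z ∈ ({x, y, u, w} : Finset (Fin t × ZMod n)), True := fun _ _ => trivial
    have hx : x ∈ ({x, y, u, w} : Finset (Fin t × ZMod n)) := by simp
    have hy : y ∈ ({x, y, u, w} : Finset (Fin t × ZMod n)) := by simp
    have hu : u ∈ ({x, y, u, w} : Finset (Fin t × ZMod n)) := by simp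
    have hw : w ∈ ({x, y, u, w} : Finset (Fin t × ZMod n)) := by simp
    exact huw (common_nbr_unique n t j (fun s => (hj s).1) x y u w hxy hne
      (hcl hx hu hxu) (hcl hy hu hyu) (hcl hx hw hxw) (hcl hy hw hyw))
end

section
/- Let n ≥ 3, t ≥ 1, and let j : Fin t → ℤ satisfy j s ≢ 0 (mod n) and 2·(j s) ≢ 0 (mod n) for all s, and set d = gcd(n, j 0, j 1, …, j (t−1)). Then the number of connected components of GI(n;j) equals d; in particular, GI(n;j) is connected if and only if d = 1. -/
open SimpleGraph

section AuxGI

variable {n t : ℕ} {j : Fin t → ℤ}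

lemma GI_adj_spoke {s s' : Fin t} (hss : s ≠ s') (v : ZMod n) :
    (GI n t j).Adj (s, v) (s', v) :=
  ⟨by simp [Prod.ext_iff, hss], Or.inl (Or.inl ⟨rfl, hss⟩)⟩

lemma GI_adj_layer (hj : ∀ s, (j s : ZMod n) ≠ 0) (s : Fin t) (v : ZMod n) :
    (GI n t j).Adj (s, v) (s, v + (j s : ZMod n)) := by
  refine ⟨?_, Or.inl (Or.inr ⟨rfl, rfl⟩)⟩
  intro h
  have h2 : v = v + (j s : ZMod n) := congrArg Prod.snd h
  exact hj s (left_eq_add.mp h2)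

lemma GI_reach_step (hj : ∀ s, (j s : ZMod n) ≠ 0) (s₀ s' : Fin t) (v : ZMod n) :
    (GI n t j).Reachable (s₀, v) (s₀, v + (j s' : ZMod n)) := by
  by_cases h : s₀ = s'
  · subst h; exact (GI_adj_layer hj s₀ v).reachable
  · exact ((GI_adj_spoke h v).reachable.trans
      (GI_adj_layer hj s' v).reachable).trans (GI_adj_spoke (Ne.symm h) _).reachable

/-- The set of integers `a` such that one can move from any vertex `(s,v)` to `(s, v+a)`. -/
def stepSet (n t : ℕ) (j : Fin t → ℤ) : AddSubgroup ℤ where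
  carrier := {a : ℤ | ∀ x : Fin t × ZMod n, (GI n t j).Reachable x (x.1, x.2 + (a : ZMod n))}
  zero_mem' := by intro x; simpa using Reachable.refl x
  add_mem' := by
    intro a b ha hb x
    have h1 := ha x
    have h2 := hb (x.1, x.2 + (a : ZMod n))
    have := h1.trans h2
    simpa [add_assoc] using this
  neg_mem' := by
    intro a ha x
    have h1 := ha (x.1, x.2 + ((-a : ℤ) : ZMod n))
    simp only [Int.cast_neg] at h1 ⊢
    rw [neg_add_cancel_right] at h1
    exact Reachable.trans (by rw [Prod.mk.eta]) h1.symm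

lemma natCast_mem_stepSet : (n : ℤ) ∈ stepSet n t j := by
  intro x
  have : (((n : ℤ)) : ZMod n) = 0 := by push_cast; simp
  rw [this, add_zero]

lemma j_mem_stepSet (hj : ∀ s, (j s : ZMod n) ≠ 0) (s : Fin t) : j s ∈ stepSet n t j :=
  fun x => GI_reach_step hj x.1 s x.2

lemma dvd_mem_stepSet (hj : ∀ s, (j s : ZMod n) ≠ 0) {a : ℤ}
    (ha : (Int.gcd (n : ℤ) (Finset.univ.gcd j) : ℤ) ∣ a) : a ∈ stepSet n t j := by
  obtain ⟨g, hg⟩ := Int.subgroup_cyclic (stepSet n t j)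
  have hmem : ∀ b : ℤ, b ∈ stepSet n t j ↔ g ∣ b := by
    intro b
    rw [hg, ← AddSubgroup.zmultiples_eq_closure, Int.mem_zmultiples_iff]
  have hn : g ∣ (n : ℤ) := (hmem _).mp natCast_mem_stepSet
  have hjs : ∀ s, g ∣ j s := fun s => (hmem _).mp (j_mem_stepSet hj s)
  have hG : g ∣ Finset.univ.gcd j := Finset.dvd_gcd (fun s _ => hjs s)
  have hd : g ∣ (Int.gcd (n : ℤ) (Finset.univ.gcd j) : ℤ) := Int.dvd_coe_gcd hn hG
  exact (hmem _).mpr (hd.trans ha)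

end AuxGI

/-- the number of connected components of `GI(n;j)` equals
`gcd(n, j 0, …, j (t-1))`; in particular the graph is connected iff this gcd is 1. -/
theorem GI_card_components (n t : ℕ) (hn : 3 ≤ n) (ht : 1 ≤ t) (j : Fin t → ℤ)
    (hj : ∀ s, (j s : ZMod n) ≠ 0 ∧ ((2 * j s : ℤ) : ZMod n) ≠ 0) :
    Nat.card (GI n t j).ConnectedComponent = Int.gcd (n : ℤ) (Finset.univ.gcd j) ∧
    ((GI n t j).Connected ↔ Int.gcd (n : ℤ) (Finset.univ.gcd j) = 1) := by
  haveI : NeZero n := ⟨by omega⟩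
  set d := Int.gcd (n : ℤ) (Finset.univ.gcd j) with hdDef
  have hj1 : ∀ s, (j s : ZMod n) ≠ 0 := fun s => (hj s).1
  have hdn : d ∣ n := Int.natCast_dvd_natCast.mp (Int.gcd_dvd_left _ _)
  let f : Fin t × ZMod n → ZMod d := fun x => ZMod.castHom hdn (ZMod d) x.2
  have hjd : ∀ s, ((j s : ℤ) : ZMod d) = 0 := by
    intro s
    rw [ZMod.intCast_zmod_eq_zero_iff_dvd]
    exact dvd_trans (Int.gcd_dvd_right _ _) (Finset.gcd_dvd (Finset.mem_univ s))
  have hadj : ∀ v w, (GI n t j).Adj v w → f v = f w := by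
    intro v w h
    obtain ⟨hne, h | h⟩ := h
    · rcases h with ⟨h, -⟩ | ⟨-, h⟩
      · simp only [f, h]
      · show ZMod.castHom hdn (ZMod d) v.2 = ZMod.castHom hdn (ZMod d) w.2
        rw [h, map_add, map_intCast, hjd, add_zero]
    · rcases h with ⟨h, -⟩ | ⟨-, h⟩
      · simp only [f, h]
      · show ZMod.castHom hdn (ZMod d) v.2 = ZMod.castHom hdn (ZMod d) w.2
        rw [h, map_add, map_intCast, hjd, add_zero]
  have hreach : ∀ v w, (GI n t j).Reachable v w → f v = f w := by
    intro v w h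
    obtain ⟨p⟩ := h
    induction p with
    | nil => rfl
    | cons h p ih => exact (hadj _ _ h).trans ih
  let g : (GI n t j).ConnectedComponent → ZMod d :=
    SimpleGraph.ConnectedComponent.lift f (fun v w p _ => hreach v w p.reachable)
  have hsurj : Function.Surjective g := by
    intro c
    obtain ⟨a, ha⟩ := ZMod.intCast_surjective c
    refine ⟨(GI n t j).connectedComponentMk (⟨0, ht⟩, (a : ZMod n)), ?_⟩
    show f _ = c
    simp only [f]
    rw [map_intCast]
    exact ha
  have hinj : Function.Injective g := by
    intro c c'
    refine SimpleGraph.ConnectedComponent.ind₂ (fun v w => ?_) c c'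
    intro h
    rw [SimpleGraph.ConnectedComponent.eq]
    replace h : f v = f w := h
    obtain ⟨a, ha⟩ := ZMod.intCast_surjective v.2
    obtain ⟨b, hb⟩ := ZMod.intCast_surjective w.2
    have hab : ((a : ℤ) : ZMod d) = ((b : ℤ) : ZMod d) := by
      have := h
      simp only [f] at this
      rw [← ha, ← hb, map_intCast, map_intCast] at this
      exact this
    have hdvd : ((d : ℕ) : ℤ) ∣ b - a := ((ZMod.intCast_eq_intCast_iff _ _ _).mp hab).dvd
    have hstep := dvd_mem_stepSet hj1 hdvd (v.1, v.2)
    have h2 : v.2 + ((b - a : ℤ) : ZMod n) = (b : ZMod n) := by rw [← ha]; push_cast; ring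
    rw [h2] at hstep
    have hr1 : (GI n t j).Reachable v (v.1, (b : ZMod n)) := by
      rw [(Prod.mk.eta : (v.1, v.2) = v)] at hstep; exact hstep
    have hr2 : (GI n t j).Reachable (v.1, (b : ZMod n)) w := by
      rw [← (Prod.mk.eta : (w.1, w.2) = w), ← hb]
      by_cases hsw : v.1 = w.1
      · rw [hsw]
      · exact (GI_adj_spoke hsw _).reachable
    exact hr1.trans hr2
  have hbij : Function.Bijective g := ⟨hinj, hsurj⟩
  have hcard : Nat.card (GI n t j).ConnectedComponent = d := by
    rw [Nat.card_eq_of_bijective g hbij, Nat.card_zmod]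
  refine ⟨hcard, ?_, ?_⟩
  · intro hc
    haveI : Subsingleton (GI n t j).ConnectedComponent :=
      ⟨SimpleGraph.ConnectedComponent.ind₂ fun v w =>
        SimpleGraph.ConnectedComponent.sound (hc.preconnected v w)⟩
    have h1 : Nat.card (GI n t j).ConnectedComponent = 1 :=
      Nat.card_eq_one_iff_unique.mpr
        ⟨inferInstance, ⟨(GI n t j).connectedComponentMk (⟨0, ht⟩, 0)⟩⟩
    omega
  · intro h1
    haveI hss : Subsingleton (ZMod d) := by rw [h1]; infer_instance
    rw [SimpleGraph.connected_iff]
    refine ⟨fun v w => ?_, ⟨(⟨0, ht⟩, 0)⟩⟩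
    rw [← SimpleGraph.ConnectedComponent.eq]
    exact hinj (Subsingleton.elim _ _)
end

section
/- Let n ≥ 3, t ≥ 1, and let j : Fin t → ℤ satisfy j s ≢ 0 (mod n) and 2·(j s) ≢ 0 (mod n) for all s. Suppose s₁ ≠ s₂ in Fin t with j s₁ = j s₂, let d = gcd(n, j s₁), and let i ∈ ℤ. Then the map λ on Fin t × ZMod n that sends (s₁,v) to (s₂,v) and (s₂,v) to (s₁,v) whenever v ≡ i (mod d) (i.e., the image of v under the natural map ZMod n → ZMod d equals i mod d), and fixes all other vertices, is an automorphism of GI(n;j); moreover λ fixes every spoke S_v setwise and maps layer edges to layer edges. -/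
open SimpleGraph

section LamAux

variable {n t : ℕ} {j : Fin t → ℤ} {s₁ s₂ : Fin t} {i : ℤ}

lemma lam_snd (x : Fin t × ZMod n) : (lamMap n t j s₁ s₂ i x).2 = x.2 := by
  unfold lamMap; split_ifs <;> rfl

lemma lam_invol (hs : s₁ ≠ s₂) (x : Fin t × ZMod n) :
    lamMap n t j s₁ s₂ i (lamMap n t j s₁ s₂ i x) = x := by
  by_cases hP : (ZMod.cast x.2 : ZMod (Int.gcd (n : ℤ) (j s₁))) =
      ((i : ℤ) : ZMod (Int.gcd (n : ℤ) (j s₁)))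
  · by_cases h1 : x.1 = s₁
    · simp [lamMap, hP, h1, hs, hs.symm, Prod.ext_iff]
    · by_cases h2 : x.1 = s₂
      · simp [lamMap, hP, h1, h2, hs, hs.symm, Prod.ext_iff]
      · simp [lamMap, hP, h1, h2]
  · simp [lamMap, hP]

lemma lam_cast_add (h12 : j s₁ = j s₂) {s : Fin t} (hss : s = s₁ ∨ s = s₂) (v : ZMod n) :
    (ZMod.cast (v + ((j s : ℤ) : ZMod n)) : ZMod (Int.gcd (n : ℤ) (j s₁))) = ZMod.cast v := by
  have hjs : j s = j s₁ := by rcases hss with h | h <;> simp [h, h12]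
  have hdn : (Int.gcd (n : ℤ) (j s₁)) ∣ n :=
    Int.natCast_dvd_natCast.mp (Int.gcd_dvd_left _ _)
  have hdj : ((Int.gcd (n : ℤ) (j s₁) : ℕ) : ℤ) ∣ j s := hjs ▸ Int.gcd_dvd_right _ _
  calc (ZMod.cast (v + ((j s : ℤ) : ZMod n)) : ZMod (Int.gcd (n : ℤ) (j s₁)))
      = ZMod.castHom hdn _ (v + ((j s : ℤ) : ZMod n)) := (ZMod.castHom_apply _).symm
    _ = ZMod.castHom hdn _ v + ZMod.castHom hdn _ ((j s : ℤ) : ZMod n) := map_add _ _ _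
    _ = ZMod.cast v + ((j s : ℤ) : ZMod (Int.gcd (n : ℤ) (j s₁))) := by
        rw [ZMod.castHom_apply, map_intCast]
    _ = ZMod.cast v := by
        rw [(ZMod.intCast_zmod_eq_zero_iff_dvd _ _).mpr hdj, add_zero]

lemma lam_eval_s1 {x : Fin t × ZMod n}
    (hP : (ZMod.cast x.2 : ZMod (Int.gcd (n : ℤ) (j s₁))) =
      ((i : ℤ) : ZMod (Int.gcd (n : ℤ) (j s₁)))) (h1 : x.1 = s₁) :
    lamMap n t j s₁ s₂ i x = (s₂, x.2) := by
  simp [lamMap, hP, h1]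

lemma lam_eval_s2 (hs : s₁ ≠ s₂) {x : Fin t × ZMod n}
    (hP : (ZMod.cast x.2 : ZMod (Int.gcd (n : ℤ) (j s₁))) =
      ((i : ℤ) : ZMod (Int.gcd (n : ℤ) (j s₁)))) (h2 : x.1 = s₂) :
    lamMap n t j s₁ s₂ i x = (s₁, x.2) := by
  have h1 : x.1 ≠ s₁ := by rw [h2]; exact hs.symm
  simp [lamMap, hP, h1, h2]

lemma lam_eval_other {x : Fin t × ZMod n} (h1 : x.1 ≠ s₁) (h2 : x.1 ≠ s₂) :
    lamMap n t j s₁ s₂ i x = x := by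
  simp [lamMap, h1, h2]

lemma lam_eval_negP {x : Fin t × ZMod n}
    (hP : ¬ (ZMod.cast x.2 : ZMod (Int.gcd (n : ℤ) (j s₁))) =
      ((i : ℤ) : ZMod (Int.gcd (n : ℤ) (j s₁)))) :
    lamMap n t j s₁ s₂ i x = x := by
  simp [lamMap, hP]

lemma lam_layer (hs : s₁ ≠ s₂) (h12 : j s₁ = j s₂) {a b : Fin t × ZMod n}
    (hab : a.1 = b.1) (hb2 : b.2 = a.2 + ((j a.1 : ℤ) : ZMod n)) :
    (lamMap n t j s₁ s₂ i a).1 = (lamMap n t j s₁ s₂ i b).1 ∧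
      (lamMap n t j s₁ s₂ i b).2 = (lamMap n t j s₁ s₂ i a).2 +
        ((j (lamMap n t j s₁ s₂ i a).1 : ℤ) : ZMod n) := by
  set d := Int.gcd (n : ℤ) (j s₁) with hd
  by_cases hss : a.1 = s₁ ∨ a.1 = s₂
  · have hPiff : ((ZMod.cast a.2 : ZMod d) = ((i : ℤ) : ZMod d)) ↔
        ((ZMod.cast b.2 : ZMod d) = ((i : ℤ) : ZMod d)) := by
      rw [hb2, lam_cast_add h12 hss]
    by_cases hP : (ZMod.cast a.2 : ZMod d) = ((i : ℤ) : ZMod d)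
    · have hPb : (ZMod.cast b.2 : ZMod d) = ((i : ℤ) : ZMod d) := hPiff.mp hP
      by_cases h1 : a.1 = s₁
      · rw [lam_eval_s1 hP h1, lam_eval_s1 hPb (hab ▸ h1)]
        exact ⟨rfl, by rw [hb2, show j s₂ = j a.1 from h1 ▸ h12.symm]⟩
      · have h2 : a.1 = s₂ := hss.resolve_left h1
        rw [lam_eval_s2 hs hP h2, lam_eval_s2 hs hPb (hab ▸ h2)]
        exact ⟨rfl, by rw [hb2, show j s₁ = j a.1 from h2 ▸ h12]⟩
    · have hPb : ¬ (ZMod.cast b.2 : ZMod d) = ((i : ℤ) : ZMod d) :=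
        fun hc => hP (hPiff.mpr hc)
      rw [lam_eval_negP hP, lam_eval_negP hPb]
      exact ⟨hab, hb2⟩
  · push_neg at hss
    have hb1 : b.1 ≠ s₁ ∧ b.1 ≠ s₂ := by rw [← hab]; exact hss
    rw [lam_eval_other hss.1 hss.2, lam_eval_other hb1.1 hb1.2]
    exact ⟨hab, hb2⟩

lemma lam_adj_mono (hs : s₁ ≠ s₂) (h12 : j s₁ = j s₂) {x y : Fin t × ZMod n}
    (h : (GI n t j).Adj x y) :
    (GI n t j).Adj (lamMap n t j s₁ s₂ i x) (lamMap n t j s₁ s₂ i y) := by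
  simp only [GI, SimpleGraph.fromRel_adj] at h ⊢
  obtain ⟨hne, hrel⟩ := h
  have hinj : lamMap n t j s₁ s₂ i x ≠ lamMap n t j s₁ s₂ i y := fun hc => hne (by
    have := congrArg (lamMap n t j s₁ s₂ i) hc
    rwa [lam_invol hs, lam_invol hs] at this)
  refine ⟨hinj, ?_⟩
  set d := Int.gcd (n : ℤ) (j s₁) with hd
  -- spoke case helper
  have spoke : ∀ {a b : Fin t × ZMod n}, a.2 = b.2 → lamMap n t j s₁ s₂ i a ≠ lamMap n t j s₁ s₂ i b →
      ((lamMap n t j s₁ s₂ i a).2 = (lamMap n t j s₁ s₂ i b).2 ∧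
        (lamMap n t j s₁ s₂ i a).1 ≠ (lamMap n t j s₁ s₂ i b).1) := by
    intro a b hab hne'
    refine ⟨by rw [lam_snd, lam_snd, hab], fun h1 => hne' ?_⟩
    exact Prod.ext h1 (by rw [lam_snd, lam_snd, hab])
  have layer := fun {a b : Fin t × ZMod n} => lam_layer (i := i) hs h12 (a := a) (b := b)
  rcases hrel with (⟨h1, _⟩ | ⟨h1, h2⟩) | (⟨h1, _⟩ | ⟨h1, h2⟩)
  · exact Or.inl (Or.inl (spoke h1 hinj))
  · exact Or.inl (Or.inr (layer h1 h2))
  · exact Or.inr (Or.inl (spoke h1 hinj.symm))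
  · exact Or.inr (Or.inr (layer h1 h2))

end LamAux

/-- if `j s₁ = j s₂` for `s₁ ≠ s₂`, the map `λ_{i,s₁,s₂}` is an
automorphism of `GI(n;j)` fixing every spoke setwise and taking layer edges to
layer edges. -/
theorem GI_lam_is_automorphism (n t : ℕ) (hn : 3 ≤ n) (ht : 1 ≤ t) (j : Fin t → ℤ)
    (hj : ∀ s, (j s : ZMod n) ≠ 0 ∧ ((2 * j s : ℤ) : ZMod n) ≠ 0)
    (s₁ s₂ : Fin t) (hs : s₁ ≠ s₂) (h12 : j s₁ = j s₂) (i : ℤ) :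
    ∃ φ : GI n t j ≃g GI n t j,
      (∀ x : Fin t × ZMod n, φ x = lamMap n t j s₁ s₂ i x) ∧
      (∀ x : Fin t × ZMod n, (φ x).2 = x.2) ∧
      (∀ x y : Fin t × ZMod n, (GI n t j).Adj x y → x.1 = y.1 → (φ x).1 = (φ y).1) := by
  refine ⟨⟨⟨lamMap n t j s₁ s₂ i, lamMap n t j s₁ s₂ i, lam_invol hs, lam_invol hs⟩, ?_⟩,
    fun x => rfl, fun x => lam_snd x, ?_⟩
  · intro x y
    constructor
    · intro h
      have := lam_adj_mono (i := i) hs h12 h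
      simpa [lam_invol hs] using this
    · exact lam_adj_mono hs h12
  · intro x y hadj hxy
    simp only [RelIso.coe_fn_mk, Equiv.coe_fn_mk]
    simp only [GI, SimpleGraph.fromRel_adj] at hadj
    obtain ⟨hne, hrel⟩ := hadj
    have key : ∀ a b : Fin t × ZMod n, a.1 = b.1 → b.2 = a.2 + ((j a.1 : ℤ) : ZMod n) →
        (lamMap n t j s₁ s₂ i a).1 = (lamMap n t j s₁ s₂ i b).1 :=
      fun a b hab hb2 => (lam_layer hs h12 hab hb2).1
    rcases hrel with (⟨_, h1⟩ | ⟨_, h2⟩) | (⟨_, h1⟩ | ⟨_, h2⟩)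
    · exact absurd hxy h1
    · exact key x y hxy h2
    · exact absurd hxy.symm h1
    · exact (key y x hxy.symm h2).symm
end

section
/- Let n ≥ 3, t ≥ 1, and let j : Fin t → ℤ satisfy j s ≢ 0 (mod n) and 2·(j s) ≢ 0 (mod n) for all s. Let a be a unit of ZMod n and let α : Fin t ≃ Fin t be a bijection such that for every s, (j (α s) : ZMod n) = a·(j s) or (j (α s) : ZMod n) = −a·(j s). Then the map σ_a : (s,v) ↦ (α s, a·v) is an automorphism of GI(n;j) that maps spoke edges to spoke edges and layer edges to layer edges. -/
open SimpleGraph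

/-- for a unit `a` of `ZMod n` and a bijection `α` with
`j (α s) ≡ ±a·(j s) (mod n)` for all `s`, the map `σ_a : (s,v) ↦ (α s, a·v)` is an
automorphism of `GI(n;j)` respecting the fundamental edge-partition. -/
theorem GI_sigma_is_automorphism (n t : ℕ) (hn : 3 ≤ n) (ht : 1 ≤ t) (j : Fin t → ℤ)
    (hj : ∀ s, (j s : ZMod n) ≠ 0 ∧ ((2 * j s : ℤ) : ZMod n) ≠ 0)
    (a : (ZMod n)ˣ) (α : Fin t ≃ Fin t)
    (hα : ∀ s, (j (α s) : ZMod n) = (a : ZMod n) * (j s : ZMod n) ∨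
               (j (α s) : ZMod n) = -((a : ZMod n) * (j s : ZMod n))) :
    ∃ φ : GI n t j ≃g GI n t j,
      (∀ x : Fin t × ZMod n, φ x = (α x.1, (a : ZMod n) * x.2)) ∧
      RespectsPart n t j (fun x => φ x) := by
  classical
  set e : Fin t × ZMod n ≃ Fin t × ZMod n :=
    Equiv.prodCongr α (Units.mulLeft a) with he
  have hcoe : ∀ x : Fin t × ZMod n, e x = (α x.1, (a : ZMod n) * x.2) := fun x => rfl
  have hcancel : ∀ v w : ZMod n, (a : ZMod n) * v = (a : ZMod n) * w ↔ v = w := by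
    intro v w
    constructor
    · intro h
      have := congrArg (fun z => ((a⁻¹ : (ZMod n)ˣ) : ZMod n) * z) h
      simpa [← mul_assoc] using this
    · intro h; rw [h]
  have key : ∀ x y : Fin t × ZMod n, (GI n t j).Adj x y → (GI n t j).Adj (e x) (e y) := by
    rintro ⟨s, v⟩ ⟨s', v'⟩ hadj
    rw [GI, fromRel_adj] at hadj ⊢
    obtain ⟨hne, hrel⟩ := hadj
    refine ⟨fun h => hne (e.injective h), ?_⟩
    simp only [hcoe] at *
    rcases hrel with (⟨h1, h2⟩ | ⟨h1, h2⟩) | (⟨h1, h2⟩ | ⟨h1, h2⟩)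
    · exact Or.inl (Or.inl ⟨by rw [h1], fun h => h2 (α.injective h)⟩)
    · rcases hα s with ha | ha
      · refine Or.inl (Or.inr ⟨by rw [h1], ?_⟩)
        rw [h2, mul_add, ha]
      · refine Or.inr (Or.inr ⟨by rw [h1], ?_⟩)
        subst h1
        rw [h2, mul_add, ha]; ring
    · exact Or.inr (Or.inl ⟨by rw [h1], fun h => h2 (α.injective h)⟩)
    · rcases hα s' with ha | ha
      · refine Or.inr (Or.inr ⟨by rw [h1], ?_⟩)
        rw [h2, mul_add, ha]
      · refine Or.inl (Or.inr ⟨by rw [h1], ?_⟩)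
        subst h1
        rw [h2, mul_add, ha]; ring
  have key2 : ∀ x y : Fin t × ZMod n, (GI n t j).Adj (e x) (e y) → (GI n t j).Adj x y := by
    rintro ⟨s, v⟩ ⟨s', v'⟩ hadj
    rw [GI, fromRel_adj] at hadj ⊢
    obtain ⟨hne, hrel⟩ := hadj
    refine ⟨fun h => hne (congrArg e h), ?_⟩
    simp only [hcoe] at hrel
    rcases hrel with (⟨h1, h2⟩ | ⟨h1, h2⟩) | (⟨h1, h2⟩ | ⟨h1, h2⟩)
    · exact Or.inl (Or.inl ⟨(hcancel v v').mp h1, fun h => h2 (congrArg α h)⟩)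
    · obtain rfl : s = s' := α.injective h1
      rcases hα s with ha | ha
      · refine Or.inl (Or.inr ⟨rfl, ?_⟩)
        rw [ha] at h2
        exact (hcancel v' (v + j s)).mp (by rw [h2, mul_add])
      · refine Or.inr (Or.inr ⟨rfl, ?_⟩)
        rw [ha] at h2
        refine (hcancel v (v' + j s)).mp ?_
        rw [mul_add]
        have : (a : ZMod n) * v = (a : ZMod n) * v' + (a : ZMod n) * (j s : ZMod n) := by
          rw [h2]; ring
        exact this
    · exact Or.inr (Or.inl ⟨(hcancel v' v).mp h1, fun h => h2 (congrArg α h)⟩)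
    · obtain rfl : s' = s := α.injective h1
      rcases hα s' with ha | ha
      · refine Or.inr (Or.inr ⟨rfl, ?_⟩)
        rw [ha] at h2
        exact (hcancel v (v' + j s')).mp (by rw [h2, mul_add])
      · refine Or.inl (Or.inr ⟨rfl, ?_⟩)
        rw [ha] at h2
        refine (hcancel v' (v + j s')).mp ?_
        rw [mul_add]
        have : (a : ZMod n) * v' = (a : ZMod n) * v + (a : ZMod n) * (j s' : ZMod n) := by
          rw [h2]; ring
        exact this
  refine ⟨⟨e, fun {x y} => ⟨key2 x y, key x y⟩⟩, fun x => rfl, ?_, ?_⟩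
  · intro x y _ h
    simp only [RelIso.coe_fn_mk, hcoe, h]
  · intro x y _ h
    simp only [RelIso.coe_fn_mk, hcoe, h]
end

section
/- Let n ≥ 3 and let S ⊆ ZMod n be a finite set with 0 ∉ S and S = −S, such that the circulant graph Circ(n;S) is connected. If ψ is an automorphism of Circ(n;S) that fixes the vertex 0 and respects the cycle-partition C (the image under ψ of every part of C is again a part of C), then there exists a unit a of ZMod n such that ψ(x) = a·x for every x ∈ ZMod n (and in particular a·S = S). -/
open SimpleGraph

/-- The circulant graph `Circ(n;S)`: vertices `ZMod n`, with `u ~ v` iff `u - v ∈ S`. -/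
def Circ (n : ℕ) (S : Set (ZMod n)) : SimpleGraph (ZMod n) :=
  SimpleGraph.fromRel (fun u v => u - v ∈ S)

/-- A part of the cycle-partition of the edges of `Circ(n;S)`: for `s ∈ S` and a coset
of the cyclic subgroup generated by `s` represented by `g₀`, the set of edges
`{g, g+s}` with `g` in that coset. -/
def cyclePart (n : ℕ) (s g₀ : ZMod n) : Set (Sym2 (ZMod n)) :=
  {e | ∃ g : ZMod n, g - g₀ ∈ AddSubgroup.zmultiples s ∧ e = Sym2.mk g (g + s)}


/-- In `ZMod n`, any element killed by `d` is a multiple of any element of additive order `d`. -/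
lemma zmod_eq_mul_of_orders {n : ℕ} [NeZero n] (d : ℕ) (u v : ZMod n) (hd : 0 < d)
    (hu : (d : ZMod n) * u = 0) (hv : addOrderOf v = d) :
    ∃ c : ℤ, u = (c : ZMod n) * v := by
  have hval : ∀ x : ZMod n, ((x.val : ℕ) : ZMod n) = x := fun x => by
    simp [ZMod.natCast_val, ZMod.cast_id]
  have hdn : d ∣ n := by
    rw [← hv]
    have h : addOrderOf v ∣ Fintype.card (ZMod n) := addOrderOf_dvd_card
    rwa [ZMod.card] at h
  set g : ℕ := Nat.gcd n v.val with hg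
  have hgpos : 0 < g := Nat.gcd_pos_of_pos_left _ (NeZero.pos n)
  have hordv : n / g = d := by
    have := ZMod.addOrderOf_coe v.val (NeZero.ne n)
    rw [hval v] at this
    rw [← this, hv]
  have hgdvdn : g ∣ n := Nat.gcd_dvd_left _ _
  have hngd : n = g * d := by
    rw [← hordv, Nat.mul_div_cancel' hgdvdn]
  -- n ∣ d * u.val
  have hnd : n ∣ d * u.val := by
    have : ((d * u.val : ℕ) : ZMod n) = 0 := by
      push_cast
      rw [hval u]
      exact hu
    exact (ZMod.natCast_eq_zero_iff ..).mp this
  have hgu : g ∣ u.val := by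
    have h2 : g * d ∣ u.val * d := by
      rw [← hngd, mul_comm u.val d]; exact hnd
    exact (Nat.mul_dvd_mul_iff_right hd).mp h2
  -- Bezout
  have hbez : (g : ℤ) = n * Nat.gcdA n v.val + v.val * Nat.gcdB n v.val :=
    Nat.gcd_eq_gcd_ab n v.val
  have hgz : (g : ZMod n) = v * ((Nat.gcdB n v.val : ℤ) : ZMod n) := by
    have := congrArg (fun z : ℤ => (z : ZMod n)) hbez
    push_cast at this
    rw [hval v] at this
    simpa [ZMod.natCast_self] using this
  refine ⟨(u.val / g : ℕ) * Nat.gcdB n v.val, ?_⟩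
  have hu2 : ((u.val / g * g : ℕ) : ZMod n) = u := by
    rw [Nat.div_mul_cancel hgu, hval u]
  push_cast at hu2
  have hsplit : (((u.val / g : ℕ) * Nat.gcdB n v.val : ℤ) : ZMod n)
      = ((u.val / g : ℕ) : ZMod n) * ((Nat.gcdB n v.val : ℤ) : ZMod n) := by
    rw [Int.cast_mul, Int.cast_natCast]
  rw [hsplit]
  linear_combination (-1 : ZMod n) * hu2 + ((u.val / g : ℕ) : ZMod n) * hgz

lemma key_const {n : ℕ} [NeZero n] (T : ZMod n → ZMod n) (S : Set (ZMod n))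
    (δ : ZMod n → ZMod n → ZMod n)
    (hδ : ∀ x : ZMod n, ∀ s ∈ S, ∀ k : ℤ, T (x + (k : ZMod n) * s) = T x + (k : ZMod n) * δ x s)
    (x s t : ZMod n) (hs : s ∈ S) (ht : t ∈ S) :
    δ (x + t) s = δ x s := by
  -- the two-variable expansion
  have hP : ∀ k l : ℤ, T (x + (k : ZMod n) * s + (l : ZMod n) * t)
      = T x + (l : ZMod n) * δ x t + (k : ZMod n) * δ (x + (l : ZMod n) * t) s := by
    intro k l
    have harg : x + (k : ZMod n) * s + (l : ZMod n) * t
        = x + (l : ZMod n) * t + (k : ZMod n) * s := by ring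
    rw [harg, hδ (x + (l : ZMod n) * t) s hs k, hδ x t ht l]
  have hQ : ∀ k l : ℤ, T (x + (k : ZMod n) * s + (l : ZMod n) * t)
      = T x + (k : ZMod n) * δ x s + (l : ZMod n) * δ (x + (k : ZMod n) * s) t := by
    intro k l
    rw [hδ (x + (k : ZMod n) * s) t ht l, hδ x s hs k]
  have hstar : ∀ k l : ℤ, (l : ZMod n) * δ x t + (k : ZMod n) * δ (x + (l : ZMod n) * t) s
      = (k : ZMod n) * δ x s + (l : ZMod n) * δ (x + (k : ZMod n) * s) t := by
    intro k l
    linear_combination (hQ k l) - (hP k l)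
  have honet : x + ((1 : ℤ) : ZMod n) * t = x + t := by push_cast; ring
  -- B k = B 0 + k e
  have hB : ∀ k : ℤ, δ (x + (k : ZMod n) * s) t
      = δ x t + (k : ZMod n) * (δ (x + t) s - δ x s) := by
    intro k
    have h := hstar k 1
    rw [honet] at h
    push_cast at h
    linear_combination -h
  have hF : ∀ k l : ℤ, T (x + (k : ZMod n) * s + (l : ZMod n) * t)
      = T x + (k : ZMod n) * δ x s + (l : ZMod n) * δ x t
        + (k : ZMod n) * (l : ZMod n) * (δ (x + t) s - δ x s) := by
    intro k l
    have h := hQ k l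
    rw [hB k] at h
    linear_combination h
  -- order bookkeeping
  set m := addOrderOf s with hmdef
  set m' := addOrderOf t with hmdef'
  set dd := Nat.gcd m m' with hdddef
  have hm : 0 < m := addOrderOf_pos s
  have hm' : 0 < m' := addOrderOf_pos t
  have hdd : 0 < dd := Nat.gcd_pos_of_pos_left m' hm
  set α := m / dd with hαdef
  set β := m' / dd with hβdef
  have hα0 : 0 < α := Nat.div_pos (Nat.le_of_dvd hm (Nat.gcd_dvd_left m m')) hdd
  have hβ0 : 0 < β := Nat.div_pos (Nat.le_of_dvd hm' (Nat.gcd_dvd_right m m')) hdd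
  have hddα : dd * α = m := Nat.mul_div_cancel' (Nat.gcd_dvd_left m m')
  have hddβ : dd * β = m' := Nat.mul_div_cancel' (Nat.gcd_dvd_right m m')
  have hms : (m : ZMod n) * s = 0 := by
    have h := addOrderOf_nsmul_eq_zero s
    rwa [nsmul_eq_mul] at h
  have hmt : (m' : ZMod n) * t = 0 := by
    have h := addOrderOf_nsmul_eq_zero t
    rwa [nsmul_eq_mul] at h
  have hukill : (dd : ZMod n) * ((α : ZMod n) * s) = 0 := by
    rw [← mul_assoc, ← Nat.cast_mul, hddα, hms]
  have hvkill : (dd : ZMod n) * ((β : ZMod n) * t) = 0 := by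
    rw [← mul_assoc, ← Nat.cast_mul, hddβ, hmt]
  have hordu : addOrderOf ((α : ZMod n) * s) = dd := by
    apply Nat.dvd_antisymm
    · apply addOrderOf_dvd_of_nsmul_eq_zero
      rw [nsmul_eq_mul]; exact hukill
    · set r := addOrderOf ((α : ZMod n) * s) with hrdef
      have hr : (r : ZMod n) * ((α : ZMod n) * s) = 0 := by
        have h := addOrderOf_nsmul_eq_zero ((α : ZMod n) * s)
        rwa [nsmul_eq_mul] at h
      have h2 : ((r * α : ℕ) : ZMod n) * s = 0 := by
        push_cast; rw [mul_assoc]; exact hr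
      have h3 : m ∣ r * α := by
        apply addOrderOf_dvd_of_nsmul_eq_zero
        rw [nsmul_eq_mul]; exact h2
      rw [← hddα] at h3
      exact (Nat.mul_dvd_mul_iff_right hα0).mp h3
  have hordv : addOrderOf ((β : ZMod n) * t) = dd := by
    apply Nat.dvd_antisymm
    · apply addOrderOf_dvd_of_nsmul_eq_zero
      rw [nsmul_eq_mul]; exact hvkill
    · set r := addOrderOf ((β : ZMod n) * t) with hrdef
      have hr : (r : ZMod n) * ((β : ZMod n) * t) = 0 := by
        have h := addOrderOf_nsmul_eq_zero ((β : ZMod n) * t)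
        rwa [nsmul_eq_mul] at h
      have h2 : ((r * β : ℕ) : ZMod n) * t = 0 := by
        push_cast; rw [mul_assoc]; exact hr
      have h3 : m' ∣ r * β := by
        apply addOrderOf_dvd_of_nsmul_eq_zero
        rw [nsmul_eq_mul]; exact h2
      rw [← hddβ] at h3
      exact (Nat.mul_dvd_mul_iff_right hβ0).mp h3
  obtain ⟨c, hc⟩ := zmod_eq_mul_of_orders dd ((α : ZMod n) * s) ((β : ZMod n) * t) hdd hukill hordv
  obtain ⟨c', hc'⟩ := zmod_eq_mul_of_orders dd ((β : ZMod n) * t) ((α : ZMod n) * s) hdd hvkill hordu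
  -- α • e = 0
  have hαe : (α : ZMod n) * (δ (x + t) s - δ x s) = 0 := by
    have g1 := hF (α : ℤ) 1
    have g0 := hF (α : ℤ) 0
    have g1' := hF 0 (c * (β : ℤ) + 1)
    have g0' := hF 0 (c * (β : ℤ))
    have harg1 : x + (((α : ℕ) : ℤ) : ZMod n) * s + ((1 : ℤ) : ZMod n) * t
        = x + ((0 : ℤ) : ZMod n) * s + (((c * (β : ℤ) + 1) : ℤ) : ZMod n) * t := by
      push_cast
      linear_combination hc
    have harg0 : x + (((α : ℕ) : ℤ) : ZMod n) * s + ((0 : ℤ) : ZMod n) * t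
        = x + ((0 : ℤ) : ZMod n) * s + (((c * (β : ℤ)) : ℤ) : ZMod n) * t := by
      push_cast
      linear_combination hc
    rw [harg1] at g1
    rw [harg0] at g0
    have e1 := g1.symm.trans g1'
    have e0 := g0.symm.trans g0'
    push_cast at e1 e0
    linear_combination e1 - e0
  have hβe : (β : ZMod n) * (δ (x + t) s - δ x s) = 0 := by
    have g1 := hF 1 (β : ℤ)
    have g0 := hF 0 (β : ℤ)
    have g1' := hF (c' * (α : ℤ) + 1) 0
    have g0' := hF (c' * (α : ℤ)) 0
    have harg1 : x + ((1 : ℤ) : ZMod n) * s + (((β : ℕ) : ℤ) : ZMod n) * t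
        = x + (((c' * (α : ℤ) + 1) : ℤ) : ZMod n) * s + ((0 : ℤ) : ZMod n) * t := by
      push_cast
      linear_combination hc'
    have harg0 : x + ((0 : ℤ) : ZMod n) * s + (((β : ℕ) : ℤ) : ZMod n) * t
        = x + (((c' * (α : ℤ)) : ℤ) : ZMod n) * s + ((0 : ℤ) : ZMod n) * t := by
      push_cast
      linear_combination hc'
    rw [harg1] at g1
    rw [harg0] at g0
    have e1 := g1.symm.trans g1'
    have e0 := g0.symm.trans g0'
    push_cast at e1 e0
    linear_combination e1 - e0
  have hcop : Nat.gcd α β = 1 := (Nat.coprime_div_gcd_div_gcd hdd).gcd_eq_one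
  have hbez := Nat.gcd_eq_gcd_ab α β
  rw [hcop] at hbez
  have h1Z : (1 : ZMod n) = (α : ZMod n) * ((Nat.gcdA α β : ℤ) : ZMod n)
      + (β : ZMod n) * ((Nat.gcdB α β : ℤ) : ZMod n) := by
    have h := congrArg (fun z : ℤ => (z : ZMod n)) hbez
    push_cast at h
    simpa using h
  linear_combination ((Nat.gcdA α β : ℤ) : ZMod n) * hαe + ((Nat.gcdB α β : ℤ) : ZMod n) * hβe
    + (δ (x + t) s - δ x s) * h1Z

lemma fact1 {n : ℕ} (S : Set (ZMod n)) (h0 : (0 : ZMod n) ∉ S)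
    (ψ : Circ n S ≃g Circ n S)
    (hresp : ∀ s ∈ S, ∀ g₀ : ZMod n, ∃ s' ∈ S, ∃ g₀' : ZMod n,
      Sym2.map (fun x => ψ x) '' cyclePart n s g₀ = cyclePart n s' g₀')
    (x s : ZMod n) (hs : s ∈ S) :
    ∃ δ : ZMod n, ∀ k : ℤ, ψ (x + (k : ZMod n) * s) = ψ x + (k : ZMod n) * δ := by
  obtain ⟨s', hs', g₀', Him⟩ := hresp s hs x
  have hinj : Function.Injective (fun z : ZMod n => ψ z) := ψ.toEquiv.injective
  -- any edge of the s-cycle through x maps into the part (s', g₀')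
  have hmem : ∀ g : ZMod n, (∃ k : ℤ, (k : ZMod n) * s = g - x) →
      Sym2.mk (ψ g) (ψ (g + s)) ∈ cyclePart n s' g₀' := by
    intro g hg
    have h1 : Sym2.mk g (g + s) ∈ cyclePart n s x := by
      refine ⟨g, ?_, rfl⟩
      rw [AddSubgroup.mem_zmultiples_iff]
      obtain ⟨k, hk⟩ := hg
      exact ⟨k, by rw [zsmul_eq_mul]; exact hk⟩
    have h2 := Set.mem_image_of_mem (Sym2.map (fun z : ZMod n => ψ z)) h1
    rw [Him] at h2
    rwa [Sym2.map_pair_eq] at h2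
  -- hence each step is ± s'
  have hA : ∀ g : ZMod n, (∃ k : ℤ, (k : ZMod n) * s = g - x) →
      ψ (g + s) = ψ g + s' ∨ ψ (g + s) = ψ g - s' := by
    intro g hg
    obtain ⟨h, hh, heq⟩ := hmem g hg
    rw [Sym2.eq_iff] at heq
    rcases heq with ⟨e1, e2⟩ | ⟨e1, e2⟩
    · left; rw [e2, ← e1]
    · right; rw [e2, e1]; ring
  -- if s has order two, so does s'
  have hL2 : s + s = 0 → s' + s' = 0 := by
    intro h2s
    have huniq : ∀ e ∈ cyclePart n s' g₀', e = Sym2.mk (ψ x) (ψ (x + s)) := by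
      intro e he
      rw [← Him] at he
      obtain ⟨e0, he0, rfl⟩ := he
      obtain ⟨g, hg, rfl⟩ := he0
      rw [AddSubgroup.mem_zmultiples_iff] at hg
      obtain ⟨k, hk⟩ := hg
      rcases Int.even_or_odd k with ⟨j, hj⟩ | ⟨j, hj⟩
      · have hgx : g = x := by
          have : k • s = 0 := by
            rw [hj, add_zsmul, ← smul_add, h2s, smul_zero]
          rw [this] at hk
          linear_combination -hk
        rw [hgx, Sym2.map_pair_eq]
      · have hgx : g = x + s := by
          have : k • s = s := by
            rw [hj, add_zsmul, one_zsmul, mul_comm, mul_zsmul, two_zsmul, h2s, smul_zero,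
              zero_add]
          rw [this] at hk
          linear_combination -hk
        have hx2 : g + s = x := by rw [hgx, add_assoc, h2s, add_zero]
        rw [hgx, hx2] at *
        rw [Sym2.map_pair_eq, Sym2.eq_swap]
    have m1 : Sym2.mk g₀' (g₀' + s') ∈ cyclePart n s' g₀' := by
      refine ⟨g₀', ?_, rfl⟩
      rw [sub_self]; exact AddSubgroup.zero_mem _
    have m2 : Sym2.mk (g₀' + s') (g₀' + s' + s') ∈ cyclePart n s' g₀' := by
      refine ⟨g₀' + s', ?_, rfl⟩
      rw [AddSubgroup.mem_zmultiples_iff]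
      exact ⟨1, by rw [one_zsmul]; ring⟩
    have e12 : Sym2.mk g₀' (g₀' + s') = Sym2.mk (g₀' + s') (g₀' + s' + s') :=
      (huniq _ m1).trans (huniq _ m2).symm
    rw [Sym2.eq_iff] at e12
    rcases e12 with ⟨h1, _⟩ | ⟨h1, _⟩
    · exfalso
      have : s' = 0 := by linear_combination -h1
      rw [this] at hs'
      exact h0 hs'
    · linear_combination -h1
  -- the sign of the step is constant
  have hD : ∀ k : ℤ, ∃ d : ZMod n, (d = s' ∨ d = -s') ∧
      ψ (x + (k : ZMod n) * s + s) = ψ (x + (k : ZMod n) * s) + d := by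
    intro k
    rcases hA (x + (k : ZMod n) * s) ⟨k, by ring⟩ with h | h
    · exact ⟨s', Or.inl rfl, h⟩
    · exact ⟨-s', Or.inr rfl, by rw [h]; ring⟩
  -- consecutive steps agree
  have hB2 : ∀ k : ℤ, ψ (x + ((k + 1 : ℤ) : ZMod n) * s + s) - ψ (x + ((k + 1 : ℤ) : ZMod n) * s)
      = ψ (x + (k : ZMod n) * s + s) - ψ (x + (k : ZMod n) * s) := by
    intro k
    obtain ⟨d1, hd1or, hd1⟩ := hD k
    obtain ⟨d2, hd2or, hd2⟩ := hD (k + 1)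
    have harg : x + ((k + 1 : ℤ) : ZMod n) * s = x + (k : ZMod n) * s + s := by
      push_cast; ring
    rw [harg] at hd2 ⊢
    have hkey : d2 = d1 → (ψ (x + (k : ZMod n) * s + s + s) - ψ (x + (k : ZMod n) * s + s)
        = ψ (x + (k : ZMod n) * s + s) - ψ (x + (k : ZMod n) * s)) := by
      intro hd
      rw [hd] at hd2
      linear_combination hd2 - hd1
    rcases hd1or with h11 | h11 <;> rcases hd2or with h21 | h21
    · exact hkey (h21.trans h11.symm)
    · -- d1 = s', d2 = -s'
      have hcol : ψ (x + (k : ZMod n) * s + s + s) = ψ (x + (k : ZMod n) * s) := by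
        rw [h21] at hd2
        rw [h11] at hd1
        linear_combination hd2 + hd1
      have hargeq : x + (k : ZMod n) * s + s + s = x + (k : ZMod n) * s := hinj hcol
      have hss : s + s = 0 := by linear_combination hargeq
      have hneg : -s' = s' := by linear_combination -(hL2 hss)
      exact hkey (by rw [h21, h11]; exact hneg)
    · -- d1 = -s', d2 = s'
      have hcol : ψ (x + (k : ZMod n) * s + s + s) = ψ (x + (k : ZMod n) * s) := by
        rw [h21] at hd2
        rw [h11] at hd1
        linear_combination hd2 + hd1
      have hargeq : x + (k : ZMod n) * s + s + s = x + (k : ZMod n) * s := hinj hcol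
      have hss : s + s = 0 := by linear_combination hargeq
      have hneg : -s' = s' := by linear_combination -(hL2 hss)
      exact hkey (by rw [h21, h11]; exact hneg.symm)
    · exact hkey (h21.trans h11.symm)
  -- the step is globally constant
  have hconst : ∀ k : ℤ, ψ (x + (k : ZMod n) * s + s) - ψ (x + (k : ZMod n) * s)
      = ψ (x + ((0 : ℤ) : ZMod n) * s + s) - ψ (x + ((0 : ℤ) : ZMod n) * s) := by
    intro k
    induction k using Int.induction_on with
    | zero => rfl
    | succ i ih => exact (hB2 i).trans ih
    | pred i ih =>
      have h := hB2 (-(i : ℤ) - 1)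
      rw [sub_add_cancel] at h
      exact h.symm.trans ih
  refine ⟨ψ (x + ((0 : ℤ) : ZMod n) * s + s) - ψ (x + ((0 : ℤ) : ZMod n) * s), ?_⟩
  intro k
  induction k using Int.induction_on with
  | zero => push_cast; simp
  | succ i ih =>
    have h := hconst i
    have harg : x + (((i : ℤ) + 1 : ℤ) : ZMod n) * s = x + ((i : ℤ) : ZMod n) * s + s := by
      push_cast; ring
    rw [harg]
    push_cast at ih h ⊢
    linear_combination ih + h
  | pred i ih =>
    have h := hconst (-(i : ℤ) - 1)
    have harg : x + ((-(i : ℤ) - 1 : ℤ) : ZMod n) * s + s = x + ((-(i : ℤ) : ℤ) : ZMod n) * s := by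
      push_cast; ring
    rw [harg] at h
    push_cast at ih h ⊢
    linear_combination ih - h

/-- any automorphism of a connected circulant graph fixing `0` and
respecting the cycle-partition is induced by multiplication by a unit of `ZMod n`. -/
theorem circulant_respecting_automorphism (n : ℕ) (hn : 3 ≤ n) (S : Set (ZMod n))
    (h0 : (0 : ZMod n) ∉ S) (hSneg : ∀ x : ZMod n, x ∈ S ↔ -x ∈ S)
    (hconn : (Circ n S).Connected)
    (ψ : Circ n S ≃g Circ n S) (hfix : ψ 0 = 0)
    (hresp : ∀ s ∈ S, ∀ g₀ : ZMod n, ∃ s' ∈ S, ∃ g₀' : ZMod n,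
      Sym2.map (fun x => ψ x) '' cyclePart n s g₀ = cyclePart n s' g₀') :
    ∃ a : (ZMod n)ˣ, (∀ x : ZMod n, ψ x = (a : ZMod n) * x) ∧
      (fun x : ZMod n => (a : ZMod n) * x) '' S = S := by
  classical
  haveI : NeZero n := ⟨by omega⟩
  have hinj : Function.Injective (fun z : ZMod n => ψ z) := ψ.toEquiv.injective
  have hF1 := fun (x s : ZMod n) (hs : s ∈ S) => fact1 S h0 ψ hresp x s hs
  choose δ0 hδ0 using hF1
  have hδface : ∀ (x s : ZMod n), s ∈ S → ∀ (k : ℤ),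
      ψ (x + (k : ZMod n) * s) = ψ x + (k : ZMod n) * (if h : s ∈ S then δ0 x s h else 0) := by
    intro x s hs k
    rw [dif_pos hs]
    exact hδ0 x s hs k
  have hkey : ∀ (x s t : ZMod n) (hs : s ∈ S) (ht : t ∈ S),
      δ0 (x + t) s hs = δ0 x s hs := by
    intro x s t hs ht
    have h := key_const (fun z : ZMod n => ψ z) S
      (fun y r => if h : r ∈ S then δ0 y r h else 0) hδface x s t hs ht
    simp only [dif_pos hs] at h
    exact h
  have hadj_mem : ∀ u v : ZMod n, (Circ n S).Adj u v → v - u ∈ S := by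
    intro u v huv
    unfold Circ at huv
    rw [SimpleGraph.fromRel_adj] at huv
    rcases huv.2 with h | h
    · have h2 := (hSneg _).mp h
      rw [neg_sub] at h2
      exact h2
    · exact h
  have hdelta_const : ∀ (s : ZMod n) (hs : s ∈ S) (x : ZMod n), δ0 x s hs = δ0 0 s hs := by
    intro s hs x
    obtain ⟨w⟩ := hconn.preconnected 0 x
    suffices h : ∀ (u y : ZMod n), (Circ n S).Walk u y → δ0 y s hs = δ0 u s hs by
      exact h 0 x w
    intro u y w
    induction w with
    | nil => rfl
    | @cons a b c hab p ih =>
      have ht : b - a ∈ S := hadj_mem a b hab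
      have h2 : δ0 (a + (b - a)) s hs = δ0 a s hs := hkey a s (b - a) hs ht
      have hb : a + (b - a) = b := by ring
      rw [hb] at h2
      exact ih.trans h2
  have hδ0s : ∀ (s : ZMod n) (hs : s ∈ S), δ0 0 s hs = ψ s := by
    intro s hs
    have h := hδ0 0 s hs 1
    simp only [Int.cast_one, one_mul, zero_add] at h
    rw [hfix, zero_add] at h
    exact h.symm
  have hstep : ∀ (x s : ZMod n), s ∈ S → ψ (x + s) = ψ x + ψ s := by
    intro x s hs
    have h := hδ0 x s hs 1
    simp only [Int.cast_one, one_mul] at h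
    rw [hdelta_const s hs x, hδ0s s hs] at h
    exact h
  have hadd : ∀ y x : ZMod n, ψ (x + y) = ψ x + ψ y := by
    intro y x
    obtain ⟨w⟩ := hconn.preconnected 0 y
    suffices h : ∀ (u v : ZMod n), (Circ n S).Walk u v →
        (∀ z : ZMod n, ψ (z + u) = ψ z + ψ u) → (∀ z : ZMod n, ψ (z + v) = ψ z + ψ v) by
      refine h 0 y w ?_ x
      intro z
      rw [add_zero, hfix, add_zero]
    intro u v w
    induction w with
    | nil => exact fun h => h
    | @cons a b c hab p ih =>
      intro hu
      apply ih
      intro z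
      have ht : b - a ∈ S := hadj_mem a b hab
      have h1 : ψ (z + a + (b - a)) = ψ (z + a) + ψ (b - a) := hstep (z + a) (b - a) ht
      have h2 : ψ (a + (b - a)) = ψ a + ψ (b - a) := hstep a (b - a) ht
      have e1 : z + a + (b - a) = z + b := by ring
      have e2 : a + (b - a) = b := by ring
      rw [e1] at h1
      rw [e2] at h2
      linear_combination h1 + hu z - h2
  have hnat : ∀ m : ℕ, ψ ((m : ZMod n)) = (m : ZMod n) * ψ 1 := by
    intro m
    induction m with
    | zero => simpa using hfix
    | succ i ih =>
      push_cast
      rw [hadd 1 (i : ZMod n), ih]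
      ring
  have hval : ∀ x : ZMod n, ((x.val : ℕ) : ZMod n) = x := fun x => by
    simp [ZMod.natCast_val, ZMod.cast_id]
  have hmul : ∀ x : ZMod n, ψ x = ψ 1 * x := by
    intro x
    have h := hnat x.val
    rw [hval x] at h
    rw [h]
    ring
  obtain ⟨y, hy⟩ := ψ.toEquiv.surjective 1
  have hy1 : ψ y = 1 := hy
  have hy' : ψ 1 * y = 1 := by rw [← hmul y]; exact hy1
  have hmemS : ∀ x : ZMod n, x ∈ S → ψ x ∈ S := by
    intro x hx
    have hx0 : x ≠ 0 := fun h => h0 (h ▸ hx)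
    have hadj : (Circ n S).Adj 0 x := by
      unfold Circ
      rw [SimpleGraph.fromRel_adj]
      refine ⟨Ne.symm hx0, Or.inr ?_⟩
      rwa [sub_zero]
    have hadj2 : (Circ n S).Adj (ψ 0) (ψ x) := ψ.map_adj_iff.mpr hadj
    rw [hfix] at hadj2
    unfold Circ at hadj2
    rw [SimpleGraph.fromRel_adj] at hadj2
    rcases hadj2.2 with h | h
    · have h2 := (hSneg _).mp h
      rw [neg_sub, sub_zero] at h2
      exact h2
    · rwa [sub_zero] at h
  refine ⟨⟨ψ 1, y, hy', by rw [mul_comm]; exact hy'⟩, fun x => hmul x, ?_⟩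
  ext z
  simp only [Set.mem_image]
  constructor
  · rintro ⟨x, hx, rfl⟩
    have h := hmemS x hx
    rwa [hmul x] at h
  · intro hz
    refine ⟨ψ.symm z, ?_, ?_⟩
    · have hz0 : z ≠ 0 := fun h => h0 (h ▸ hz)
      have hadj : (Circ n S).Adj 0 z := by
        unfold Circ
        rw [SimpleGraph.fromRel_adj]
        refine ⟨Ne.symm hz0, Or.inr ?_⟩
        rwa [sub_zero]
      have hadj2 : (Circ n S).Adj (ψ.symm 0) (ψ.symm z) := ψ.symm.map_adj_iff.mpr hadj
      have hsym0 : ψ.symm 0 = 0 := (Equiv.symm_apply_eq ψ.toEquiv).mpr hfix.symm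
      rw [hsym0] at hadj2
      unfold Circ at hadj2
      rw [SimpleGraph.fromRel_adj] at hadj2
      rcases hadj2.2 with h | h
      · have h2 := (hSneg _).mp h
        rw [neg_sub, sub_zero] at h2
        exact h2
      · rwa [sub_zero] at h
    · have h := hmul (ψ.symm z)
      rw [ψ.apply_symm_apply z] at h
      exact h.symm
end

section
/- Let n ≥ 3, t ≥ 1, and let j : Fin t → ℤ satisfy 0 < j s < n/2 for all s. Suppose X = GI(n;j) is connected and every automorphism of X respects the fundamental edge-partition. Let B be the set of units a of ZMod n for which there exists a bijection β : Fin t ≃ Fin t with a·(j s : ZMod n) = ±(j (β s) : ZMod n) for all s. For each s, let m s = #{s' ∈ Fin t : j s' = j s} and d s = gcd(n, j s). Then the automorphism group of X has order n · |B| · ∏_c (m_c)!^{d_c}, where the product runs over the distinct values c of j (with m_c the multiplicity of c in j and d_c = gcd(n,c)). -/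
open SimpleGraph

namespace GIaux

variable {n t : ℕ} {j : Fin t → ℤ}

lemma jz_ne_zero (hn : 3 ≤ n) (h1 : 0 < j s) (h2 : 2 * j s < (n : ℤ)) :
    ((j s : ℤ) : ZMod n) ≠ 0 := by
  intro h
  rw [ZMod.intCast_zmod_eq_zero_iff_dvd] at h
  have := Int.le_of_dvd h1 h
  omega

lemma two_jz_ne_zero (hn : 3 ≤ n) (h1 : 0 < j s) (h2 : 2 * j s < (n : ℤ)) :
    ((j s : ℤ) : ZMod n) + ((j s : ℤ) : ZMod n) ≠ 0 := by
  intro h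
  rw [← Int.cast_add, ZMod.intCast_zmod_eq_zero_iff_dvd] at h
  have := Int.le_of_dvd (by omega) h
  omega

/-- rigidity: congruence mod n up to sign implies integer equality, for small positive values -/
lemma rig {x y : ℤ} (hx1 : 0 < x) (hx2 : 2 * x < (n : ℤ)) (hy1 : 0 < y) (hy2 : 2 * y < (n : ℤ))
    (h : (x : ZMod n) = (y : ZMod n) ∨ (x : ZMod n) = -(y : ZMod n)) : x = y := by
  rcases h with h | h
  · have : ((x - y : ℤ) : ZMod n) = 0 := by push_cast; rw [h]; ring
    rw [ZMod.intCast_zmod_eq_zero_iff_dvd] at this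
    have := Int.eq_zero_of_abs_lt_dvd this (by rw [abs_sub_lt_iff]; omega)
    omega
  · have : ((x + y : ℤ) : ZMod n) = 0 := by push_cast; rw [h]; ring
    rw [ZMod.intCast_zmod_eq_zero_iff_dvd] at this
    have := Int.le_of_dvd (by omega) this
    omega

lemma adj_iff (hn : 3 ≤ n) (hj : ∀ s, 0 < j s ∧ 2 * j s < (n : ℤ)) (s s' : Fin t)
    (v w : ZMod n) :
    (GI n t j).Adj (s, v) (s', w) ↔
      (v = w ∧ s ≠ s') ∨ (s = s' ∧ (w = v + (j s : ZMod n) ∨ v = w + (j s : ZMod n))) := by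
  rw [GI, SimpleGraph.fromRel_adj]
  dsimp only
  constructor
  · rintro ⟨hne, (⟨h1, h2⟩ | ⟨h1, h2⟩) | (⟨h1, h2⟩ | ⟨h1, h2⟩)⟩
    · exact Or.inl ⟨h1, h2⟩
    · exact Or.inr ⟨h1, Or.inl h2⟩
    · exact Or.inl ⟨h1.symm, Ne.symm h2⟩
    · exact Or.inr ⟨h1.symm, Or.inr (by rw [h2]; rw [h1])⟩
  · rintro (⟨h1, h2⟩ | ⟨h1, h2 | h2⟩)
    · exact ⟨by simp [Prod.ext_iff, h2], Or.inl (Or.inl ⟨h1, h2⟩)⟩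
    · refine ⟨?_, Or.inl (Or.inr ⟨h1, h2⟩)⟩
      intro hc
      have : v = w := (Prod.ext_iff.mp hc).2
      rw [← this, left_eq_add] at h2
      exact jz_ne_zero hn (hj s).1 (hj s).2 h2
    · refine ⟨?_, Or.inr (Or.inr ⟨h1.symm, by rw [← h1]; exact h2⟩)⟩
      intro hc
      have : v = w := (Prod.ext_iff.mp hc).2
      rw [this, left_eq_add] at h2
      exact jz_ne_zero hn (hj s).1 (hj s).2 h2

/-- if `f` is invariant under adding `x`, it is invariant under the subgroup generated by `x` -/
lemma stepInv {α : Type*} (f : ZMod n → α) (x : ZMod n) (hf : ∀ v, f (v + x) = f v) :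
    ∀ y ∈ AddSubgroup.closure {x}, ∀ v, f (v + y) = f v := by
  intro y hy
  induction hy using AddSubgroup.closure_induction with
  | mem z hz => intro v; rcases Set.mem_singleton_iff.mp hz with rfl; exact hf v
  | zero => intro v; simp
  | add z w _ _ hz hw => intro v; rw [← add_assoc, hw, hz]  -- names? add case
  | neg z _ hz => intro v; have := hz (v + -z); simpa using this.symm

end GIaux

namespace GIaux2
variable {n t : ℕ} {j : Fin t → ℤ}

lemma gcd_mem (x : ℤ) :
    ((Int.gcd (n : ℤ) x : ℕ) : ZMod n) ∈ AddSubgroup.closure {((x : ℤ) : ZMod n)} := by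
  have hB := Int.gcd_eq_gcd_ab (n : ℤ) x
  have : ((Int.gcd (n : ℤ) x : ℕ) : ZMod n) = ((Int.gcd (n:ℤ) x : ℤ) : ZMod n) := by
    push_cast; ring
  rw [this, hB]
  push_cast
  rw [ZMod.natCast_self, zero_mul, zero_add]
  have hm := AddSubgroup.zsmul_mem (AddSubgroup.closure {((x:ℤ) : ZMod n)})
    (AddSubgroup.subset_closure rfl) ((n:ℤ).gcdB x)
  rw [zsmul_eq_mul] at hm
  rwa [mul_comm]

lemma dvd_mem {x y : ℤ} (hx : (Int.gcd (n : ℤ) x : ℤ) ∣ y) :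
    ((y : ℤ) : ZMod n) ∈ AddSubgroup.closure {((x : ℤ) : ZMod n)} := by
  rcases hx with ⟨e, rfl⟩
  have : (((Int.gcd (n:ℤ) x : ℤ) * e : ℤ) : ZMod n) = e • ((Int.gcd (n:ℤ) x : ℕ) : ZMod n) := by
    rw [zsmul_eq_mul]; push_cast; ring
  rw [this]
  exact AddSubgroup.zsmul_mem _ (gcd_mem x) _

lemma conn_gen (hn : 3 ≤ n) (hj : ∀ s, 0 < j s ∧ 2 * j s < (n : ℤ))
    (hconn : (GI n t j).Connected) (v : ZMod n) :
    v ∈ AddSubgroup.closure (Set.range (fun s => ((j s : ℤ) : ZMod n))) := by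
  have ht : 0 < t := by
    rcases hconn.nonempty with ⟨⟨s, _⟩⟩
    exact s.pos
  have key : ∀ (x y : Fin t × ZMod n), (GI n t j).Reachable x y →
      y.2 - x.2 ∈ AddSubgroup.closure (Set.range (fun s => ((j s : ℤ) : ZMod n))) := by
    intro x y ⟨w⟩
    induction w with
    | nil => simpa using AddSubgroup.zero_mem _
    | @cons a b c hadj p ih =>
      have h1 : c.2 - a.2 = (c.2 - b.2) + (b.2 - a.2) := by ring
      rw [h1]
      refine AddSubgroup.add_mem _ ih ?_
      rcases a with ⟨s, va⟩; rcases b with ⟨s', vb⟩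
      rw [GIaux.adj_iff hn hj] at hadj
      rcases hadj with ⟨h, _⟩ | ⟨_, h | h⟩
      · simpa [h] using AddSubgroup.zero_mem _
      · have : vb - va = ((j s : ℤ) : ZMod n) := by rw [h]; ring
        rw [this]
        exact AddSubgroup.subset_closure ⟨s, rfl⟩
      · have : vb - va = -((j s : ℤ) : ZMod n) := by rw [h]; ring
        rw [this]
        exact AddSubgroup.neg_mem _ (AddSubgroup.subset_closure ⟨s, rfl⟩)
  have := key (⟨0, ht⟩, 0) (⟨0, ht⟩, v) (hconn.preconnected _ _)
  simpa using this

end GIaux2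

def DataCond (n : ℕ) {t : ℕ} (j : Fin t → ℤ) (a : ZMod n) (σ : Fin t → ZMod n → Fin t) : Prop :=
  (∀ s v, σ s (v + (j s : ZMod n)) = σ s v) ∧
  (∀ s v, ((j (σ s v) : ZMod n) = a * (j s : ZMod n)) ∨
    ((j (σ s v) : ZMod n) = -(a * (j s : ZMod n)))) ∧
  (∀ v : ZMod n, Function.Injective (fun s => σ s v))

namespace GIaux3
variable {n t : ℕ} {j : Fin t → ℤ}

theorem exists_data (hn : 3 ≤ n) (ht : 1 ≤ t) (hj : ∀ s, 0 < j s ∧ 2 * j s < (n : ℤ))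
    (hconn : (GI n t j).Connected) (φ : GI n t j ≃g GI n t j)
    (hφ : RespectsPart n t j (fun x => φ x)) :
    ∃ (a : (ZMod n)ˣ) (b : ZMod n),
      DataCond n j (a : ZMod n) (fun s v => (φ (s, v)).1) ∧
      ∀ s v, (φ (s, v)).2 = (a : ZMod n) * v + b := by
  haveI : NeZero n := ⟨by omega⟩
  set s₀ : Fin t := ⟨0, ht⟩ with hs₀
  set g : ZMod n → ZMod n := fun v => (φ (s₀, v)).2 with hg
  -- second coordinate independent of layer
  have snd_eq : ∀ s v, (φ (s, v)).2 = g v := by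
    intro s v
    rcases eq_or_ne s s₀ with rfl | hne
    · rfl
    · exact hφ.1 (s, v) (s₀, v) ((GIaux.adj_iff hn hj _ _ _ _).mpr (Or.inl ⟨rfl, hne⟩)) rfl
  have phi_inj : Function.Injective (fun x => φ x) := fun x y h => by
    simpa using congrArg φ.symm h
  -- g is injective
  have g_inj : Function.Injective g := by
    intro v w hvw
    by_contra hne
    have F_inj : Function.Injective (fun x : Fin t ⊕ Fin t =>
        Sum.elim (fun s => (φ (s, v)).1) (fun s => (φ (s, w)).1) x) := by
      rintro (x | x) (y | y) h <;> dsimp at h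
      · have h2 : φ (x, v) = φ (y, v) := by
          refine Prod.ext h ?_; rw [snd_eq, snd_eq]
        have := phi_inj h2; simp_all
      · have h2 : φ (x, v) = φ (y, w) := by
          refine Prod.ext h ?_; rw [snd_eq, snd_eq, hvw]
        have := phi_inj h2
        exact absurd (congrArg Prod.snd this) hne
      · have h2 : φ (x, w) = φ (y, v) := by
          refine Prod.ext h ?_; rw [snd_eq, snd_eq, hvw]
        have := phi_inj h2
        exact absurd (congrArg Prod.snd this).symm hne
      · have h2 : φ (x, w) = φ (y, w) := by
          refine Prod.ext h ?_; rw [snd_eq, snd_eq]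
        have := phi_inj h2; simp_all
    have hcard := Fintype.card_le_of_injective _ F_inj
    simp [Fintype.card_sum] at hcard
    omega
  have g_bij : Function.Bijective g := (Finite.injective_iff_bijective).mp g_inj
  -- first coordinate constant along a layer
  have fst_step : ∀ s v, (φ (s, v + (j s : ZMod n))).1 = (φ (s, v)).1 := by
    intro s v
    exact (hφ.2 (s, v) (s, v + (j s : ZMod n))
      ((GIaux.adj_iff hn hj _ _ _ _).mpr (Or.inr ⟨rfl, Or.inl rfl⟩)) rfl).symm
  -- difference along layer
  set D : Fin t → ZMod n → ZMod n := fun s v => g (v + (j s : ZMod n)) - g v with hD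
  have D_mem : ∀ s v, D s v = (j ((φ (s, v)).1) : ZMod n) ∨
      D s v = -(j ((φ (s, v)).1) : ZMod n) := by
    intro s v
    have hadj : (GI n t j).Adj (φ (s, v)) (φ (s, v + (j s : ZMod n))) :=
      φ.map_rel_iff.mpr ((GIaux.adj_iff hn hj _ _ _ _).mpr (Or.inr ⟨rfl, Or.inl rfl⟩))
    rw [← Prod.mk.eta (p := φ (s, v)), ← Prod.mk.eta (p := φ (s, v + (j s : ZMod n))),
      GIaux.adj_iff hn hj] at hadj
    rcases hadj with ⟨_, hne⟩ | ⟨_, h | h⟩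
    · exact absurd (fst_step s v) hne.symm
    · left
      rw [snd_eq, snd_eq] at h
      rw [hD]; dsimp only; rw [h]; ring
    · right
      rw [snd_eq, snd_eq] at h
      rw [hD]; dsimp only; rw [h]; ring
  have D_step : ∀ s v, D s (v + (j s : ZMod n)) = D s v := by
    intro s v
    have h1 := D_mem s v
    have h2 := D_mem s (v + (j s : ZMod n))
    rw [fst_step s v] at h2
    have hsum : D s (v + (j s : ZMod n)) + D s v =
        g (v + (j s : ZMod n) + (j s : ZMod n)) - g v := by
      rw [hD]; dsimp only; ring
    have hcontra : D s (v + (j s : ZMod n)) + D s v ≠ 0 := by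
      intro h0
      rw [h0] at hsum
      have := g_inj (sub_eq_zero.mp hsum.symm)
      rw [add_assoc, add_eq_left] at this
      exact GIaux.two_jz_ne_zero hn (hj s).1 (hj s).2 this
    rcases h1 with h1 | h1 <;> rcases h2 with h2 | h2
    · rw [h1, h2]
    · exact absurd (by rw [h1, h2]; ring) hcontra
    · exact absurd (by rw [h1, h2]; ring) hcontra
    · rw [h1, h2]
  have D_inv : ∀ s, ∀ y ∈ AddSubgroup.closure {((j s : ℤ) : ZMod n)}, ∀ v,
      D s (v + y) = D s v := fun s => GIaux.stepInv (D s) _ (fun v => D_step s v)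
  -- the key cancellation: D s is invariant under each generator
  have key : ∀ s s' v, D s (v + (j s' : ZMod n)) = D s v := by
    intro s s' v
    set cf : ZMod n → ZMod n := fun u => D s (u + (j s' : ZMod n)) - D s u with hcf
    have cf_symm : ∀ u, cf u = D s' (u + (j s : ZMod n)) - D s' u := by
      intro u; rw [hcf]; dsimp only; rw [hD]; dsimp only; ring_nf
    have cf_invS : ∀ u, cf (u + (j s : ZMod n)) = cf u := by
      intro u
      rw [hcf]; dsimp only
      rw [show u + (j s : ZMod n) + (j s' : ZMod n) = (u + (j s' : ZMod n)) + (j s : ZMod n)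
        from by ring, D_step, D_step]
    have cf_invS' : ∀ u, cf (u + (j s' : ZMod n)) = cf u := by
      intro u
      rw [cf_symm, cf_symm]
      rw [show u + (j s' : ZMod n) + (j s : ZMod n) = (u + (j s : ZMod n)) + (j s' : ZMod n)
        from by ring, D_step, D_step]
    have cf_aux1 : ∀ k : ℕ, cf (v + k • ((j s' : ℤ) : ZMod n)) = cf v := by
      intro k; induction k with
      | zero => simp
      | succ k ih => rw [succ_nsmul, ← add_assoc, cf_invS', ih]
    have cf_aux2 : ∀ k : ℕ, cf (v + k • ((j s : ℤ) : ZMod n)) = cf v := by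
      intro k; induction k with
      | zero => simp
      | succ k ih => rw [succ_nsmul, ← add_assoc, cf_invS, ih]
    have AP1 : ∀ k : ℕ, D s (v + k • ((j s' : ℤ) : ZMod n)) = D s v + k • cf v := by
      intro k; induction k with
      | zero => simp
      | succ k ih =>
        rw [succ_nsmul, ← add_assoc]
        have : D s ((v + k • ((j s' : ℤ) : ZMod n)) + (j s' : ZMod n)) =
            D s (v + k • ((j s' : ℤ) : ZMod n)) + cf (v + k • ((j s' : ℤ) : ZMod n)) := by
          rw [hcf]; dsimp only; ring
        rw [this, cf_aux1, ih, succ_nsmul]; ring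
    have AP2 : ∀ k : ℕ, D s' (v + k • ((j s : ℤ) : ZMod n)) = D s' v + k • cf v := by
      intro k; induction k with
      | zero => simp
      | succ k ih =>
        rw [succ_nsmul, ← add_assoc]
        have : D s' ((v + k • ((j s : ℤ) : ZMod n)) + (j s : ZMod n)) =
            D s' (v + k • ((j s : ℤ) : ZMod n)) + cf (v + k • ((j s : ℤ) : ZMod n)) := by
          rw [cf_symm (v + k • ((j s : ℤ) : ZMod n))]; ring
        rw [this, cf_aux2, ih, succ_nsmul]; ring
    -- now the coprimality argument
    set dS : ℕ := Int.gcd (n : ℤ) (j s) with hdS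
    set dS' : ℕ := Int.gcd (n : ℤ) (j s') with hdS'
    set G : ℕ := Nat.gcd dS dS' with hG
    have hdSpos : 0 < dS := Int.gcd_pos_of_ne_zero_left _ (by positivity)
    have hGpos : 0 < G := Nat.gcd_pos_of_pos_left _ hdSpos
    have hGdvd' : (G : ℤ) ∣ j s' := by
      have h1 : (G : ℤ) ∣ (dS' : ℤ) := Int.natCast_dvd_natCast.mpr (Nat.gcd_dvd_right _ _)
      exact h1.trans (Int.gcd_dvd_right _ _)
    have hGdvd : (G : ℤ) ∣ j s := by
      have h1 : (G : ℤ) ∣ (dS : ℤ) := Int.natCast_dvd_natCast.mpr (Nat.gcd_dvd_left _ _)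
      exact h1.trans (Int.gcd_dvd_right _ _)
    have hm1 : (dS / G) • cf v = 0 := by
      have hmem : ((dS / G : ℕ) : ZMod n) * ((j s' : ℤ) : ZMod n) ∈
          AddSubgroup.closure {((j s : ℤ) : ZMod n)} := by
        have : (((dS / G : ℕ) * j s' : ℤ) : ZMod n) ∈
            AddSubgroup.closure {((j s : ℤ) : ZMod n)} := by
          apply GIaux2.dvd_mem
          rcases hGdvd' with ⟨e, he⟩
          refine ⟨e, ?_⟩
          rw [he, ← hdS]
          rw [show ((dS/G : ℕ) : ℤ) * ((G:ℤ) * e) = (((dS/G) * G : ℕ) : ℤ) * e from by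
            push_cast; ring]
          rw [Nat.div_mul_cancel (Nat.gcd_dvd_left _ _)]
        rwa [show (((dS / G : ℕ) * j s' : ℤ) : ZMod n) =
          ((dS / G : ℕ) : ZMod n) * ((j s' : ℤ) : ZMod n) from by
            rw [Int.cast_mul, Int.cast_natCast]] at this
      have h0 := AP1 (dS / G)
      rw [show ((dS / G : ℕ)) • ((j s' : ℤ) : ZMod n) =
        ((dS / G : ℕ) : ZMod n) * ((j s' : ℤ) : ZMod n) from by rw [nsmul_eq_mul]] at h0
      rw [D_inv s _ hmem v] at h0
      exact (left_eq_add).mp h0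
    have hm2 : (dS' / G) • cf v = 0 := by
      have hmem : ((dS' / G : ℕ) : ZMod n) * ((j s : ℤ) : ZMod n) ∈
          AddSubgroup.closure {((j s' : ℤ) : ZMod n)} := by
        have : (((dS' / G : ℕ) * j s : ℤ) : ZMod n) ∈
            AddSubgroup.closure {((j s' : ℤ) : ZMod n)} := by
          apply GIaux2.dvd_mem
          rcases hGdvd with ⟨e, he⟩
          refine ⟨e, ?_⟩
          rw [he, ← hdS']
          rw [show ((dS'/G : ℕ) : ℤ) * ((G:ℤ) * e) = (((dS'/G) * G : ℕ) : ℤ) * e from by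
            push_cast; ring]
          rw [Nat.div_mul_cancel (Nat.gcd_dvd_right _ _)]
        rwa [show (((dS' / G : ℕ) * j s : ℤ) : ZMod n) =
          ((dS' / G : ℕ) : ZMod n) * ((j s : ℤ) : ZMod n) from by
            rw [Int.cast_mul, Int.cast_natCast]] at this
      have h0 := AP2 (dS' / G)
      rw [show ((dS' / G : ℕ)) • ((j s : ℤ) : ZMod n) =
        ((dS' / G : ℕ) : ZMod n) * ((j s : ℤ) : ZMod n) from by rw [nsmul_eq_mul]] at h0
      rw [D_inv s' _ hmem v] at h0
      exact (left_eq_add).mp h0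
    have hcop : Nat.Coprime (dS / G) (dS' / G) := Nat.coprime_div_gcd_div_gcd hGpos
    have hcf0 : cf v = 0 := by
      have hbez := Nat.gcd_eq_gcd_ab (dS / G) (dS' / G)
      rw [hcop] at hbez
      have : cf v = ((1 : ℤ)) • cf v := (one_zsmul _).symm
      rw [this, show (1 : ℤ) = ((dS/G : ℕ) : ℤ) * (Nat.gcdA (dS/G) (dS'/G)) +
        ((dS'/G : ℕ) : ℤ) * (Nat.gcdB (dS/G) (dS'/G)) from by exact_mod_cast hbez]
      rw [add_zsmul, mul_comm ((dS/G : ℕ) : ℤ), mul_comm ((dS'/G : ℕ) : ℤ), mul_zsmul,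
        mul_zsmul, natCast_zsmul, natCast_zsmul, hm1, hm2]
      simp
    have := sub_eq_zero.mp hcf0
    exact this
  -- D s is globally constant
  have D_const : ∀ s v, D s v = D s 0 := by
    intro s v
    let U : AddSubgroup (ZMod n) :=
      { carrier := {x | ∀ s' v', D s' (v' + x) = D s' v'}
        zero_mem' := by intro s' v'; simp
        add_mem' := by
          intro x y hx hy s' v'
          rw [← add_assoc, hy, hx]
        neg_mem' := by
          intro x hx s' v'
          have := hx s' (v' + -x)
          simpa using this.symm }
    have hsub : AddSubgroup.closure (Set.range (fun s' => ((j s' : ℤ) : ZMod n))) ≤ U := by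
      rw [AddSubgroup.closure_le]
      rintro x ⟨s', rfl⟩
      intro s'' v''
      exact key s'' s' v''
    have hv : v ∈ U := hsub (GIaux2.conn_gen hn hj hconn v)
    have := hv s 0
    rwa [zero_add] at this
  -- additivity of g - g 0
  have hadd : ∀ w v, g (v + w) - g v = g w - g 0 := by
    intro w
    let V : AddSubgroup (ZMod n) :=
      { carrier := {w | ∀ v, g (v + w) - g v = g w - g 0}
        zero_mem' := by intro v; simp
        add_mem' := by
          intro x y hx hy v
          have h1 : g (v + (x + y)) - g v = (g ((v + x) + y) - g (v + x)) + (g (v + x) - g v) := by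
            rw [← add_assoc]; ring
          rw [h1, hy (v + x), hx v]
          have h2 : g (x + y) - g 0 = (g (x + y) - g x) + (g x - g 0) := by ring
          rw [h2, hy x]
        neg_mem' := by
          intro x hx v
          have h1 := hx (v + -x)
          have h2 := hx (-x)
          rw [neg_add_cancel] at h2
          have : g (v + -x) - g v = -(g ((v + -x) + x) - g (v + -x)) := by
            rw [add_assoc, neg_add_cancel, add_zero]; ring
          rw [this, h1, ← h2]; ring }
    have hsub : AddSubgroup.closure (Set.range (fun s' => ((j s' : ℤ) : ZMod n))) ≤ V := by
      rw [AddSubgroup.closure_le]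
      rintro x ⟨s', rfl⟩
      intro v
      have h1 : g (v + (j s' : ZMod n)) - g v = D s' v := by rw [hD]
      have h2 : g ((j s' : ZMod n)) - g 0 = D s' 0 := by rw [hD]; dsimp only; rw [zero_add]
      rw [h1, h2, D_const]
    intro v
    exact hsub (GIaux2.conn_gen hn hj hconn w) v
  -- linearity
  have hlin : ∀ v : ZMod n, g v - g 0 = v * (g 1 - g 0) := by
    intro v
    obtain ⟨k, rfl⟩ := ZMod.natCast_zmod_surjective v
    induction k with
    | zero => simp
    | succ k ih =>
      push_cast
      have h1 : g ((k : ZMod n) + 1) - g (k : ZMod n) = g 1 - g 0 := hadd 1 (k : ZMod n)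
      have h2 : g ((k : ZMod n) + 1) - g 0 =
          (g ((k : ZMod n) + 1) - g (k : ZMod n)) + (g (k : ZMod n) - g 0) := by ring
      rw [h2, h1, ih]
      ring
  have hsurj : ∃ w : ZMod n, w * (g 1 - g 0) = 1 := by
    obtain ⟨w, hw⟩ := g_bij.2 (1 + g 0)
    refine ⟨w, ?_⟩
    have h3 := hlin w
    rw [hw] at h3
    rw [← h3]; ring
  have hU : IsUnit (g 1 - g 0) := by
    obtain ⟨w, hw⟩ := hsurj
    exact IsUnit.of_mul_eq_one w (by rw [mul_comm]; exact hw)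
  refine ⟨hU.unit, g 0, ⟨?_, ?_, ?_⟩, ?_⟩
  · intro s v; exact fst_step s v
  · intro s v
    have hD0 : D s v = (hU.unit : ZMod n) * (j s : ZMod n) := by
      rw [IsUnit.unit_spec, D_const s v]
      have h4 : D s 0 = g ((j s : ZMod n)) - g 0 := by rw [hD]; dsimp only; rw [zero_add]
      rw [h4, hlin]
      ring
    rcases D_mem s v with h | h
    · left; rw [← hD0, h]
    · right
      have h5 : (j ((φ (s, v)).1) : ZMod n) = -(D s v) := by rw [h]; ring
      rw [hD0] at h5
      exact h5
  · intro v s1 s2 hss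
    dsimp only at hss
    have h6 : φ (s1, v) = φ (s2, v) := Prod.ext hss (by rw [snd_eq, snd_eq])
    exact (Prod.ext_iff.mp (phi_inj h6)).1
  · intro s v
    rw [snd_eq, IsUnit.unit_spec]
    have h7 := hlin v
    rw [sub_eq_iff_eq_add] at h7
    rw [h7]; ring

end GIaux3

namespace GIaux4

def PDataT (n t : ℕ) (j : Fin t → ℤ) :=
  {p : ZMod n × (ZMod n)ˣ × (Fin t → ZMod n → Fin t) // DataCond n j p.2.1 p.2.2}

variable {n t : ℕ} {j : Fin t → ℤ}

def ofDataFun (p : PDataT n t j) (x : Fin t × ZMod n) : Fin t × ZMod n :=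
  (p.1.2.2 x.1 x.2, (p.1.2.1 : ZMod n) * x.2 + p.1.1)

lemma sigma_sub (p : PDataT n t j) (s : Fin t) (v : ZMod n) :
    p.1.2.2 s (v - (j s : ZMod n)) = p.1.2.2 s v := by
  have := p.2.1 s (v - (j s : ZMod n))
  rw [sub_add_cancel] at this
  exact this.symm

lemma hcan (p : PDataT n t j) (x y : ZMod n)
    (h : (p.1.2.1 : ZMod n) * x = (p.1.2.1 : ZMod n) * y) : x = y :=
  (p.1.2.1).isUnit.mul_left_cancel h

lemma hlayer (p : PDataT n t j) (s s' : Fin t) (v v' : ZMod n)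
    (h : v' = v + (j s : ZMod n) ∨ v' = v - (j s : ZMod n))
    (hs : p.1.2.2 s v = p.1.2.2 s' v') : s = s' := by
  have h1 : p.1.2.2 s v' = p.1.2.2 s' v' := by
    rcases h with rfl | rfl
    · rw [p.2.1 s v, hs]
    · rw [sigma_sub p s v, hs]
  exact p.2.2.2 v' h1

lemma ofData_inj (p : PDataT n t j) : Function.Injective (ofDataFun p) := by
  rintro ⟨s, v⟩ ⟨s', v'⟩ h
  rw [ofDataFun, ofDataFun, Prod.ext_iff] at h
  obtain ⟨h1, h2⟩ := h
  dsimp only at h1 h2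
  have hv : v = v' := hcan p _ _ (add_right_cancel h2)
  subst hv
  exact Prod.ext (p.2.2.2 v h1) rfl

lemma ofData_adj (hn : 3 ≤ n) (hj : ∀ s, 0 < j s ∧ 2 * j s < (n : ℤ)) (p : PDataT n t j)
    (x y : Fin t × ZMod n) :
    (GI n t j).Adj (ofDataFun p x) (ofDataFun p y) ↔ (GI n t j).Adj x y := by
  rcases x with ⟨s, v⟩; rcases y with ⟨s', v'⟩
  rw [ofDataFun, ofDataFun]
  rw [GIaux.adj_iff hn hj, GIaux.adj_iff hn hj]
  constructor
  · rintro (⟨h1, h2⟩ | ⟨h1, h2 | h2⟩)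
    · have hv : v = v' := hcan p _ _ (add_right_cancel h1)
      subst hv
      refine Or.inl ⟨rfl, fun hc => h2 ?_⟩
      subst hc; rfl
    · dsimp only at h1 h2
      have h3 : (p.1.2.1 : ZMod n) * v' =
          (p.1.2.1 : ZMod n) * v + (j (p.1.2.2 s v) : ZMod n) := by
        have := h2
        rw [add_right_comm ((p.1.2.1 : ZMod n) * v) p.1.1] at this
        exact add_right_cancel this
      rcases p.2.2.1 s v with hc | hc
      · have hv' : v' = v + (j s : ZMod n) := by
          apply hcan p
          linear_combination h3 + hc
        have hs : s = s' := hlayer p s s' v v' (Or.inl hv') h1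
        exact Or.inr ⟨hs, Or.inl hv'⟩
      · have hv' : v' = v - (j s : ZMod n) := by
          apply hcan p
          linear_combination h3 + hc
        have hs : s = s' := hlayer p s s' v v' (Or.inr hv') h1
        exact Or.inr ⟨hs, Or.inr (by rw [hv', sub_add_cancel])⟩
    · dsimp only at h1 h2
      have h3 : (p.1.2.1 : ZMod n) * v =
          (p.1.2.1 : ZMod n) * v' + (j (p.1.2.2 s v) : ZMod n) := by
        have := h2
        rw [add_right_comm ((p.1.2.1 : ZMod n) * v') p.1.1] at this
        exact add_right_cancel this
      rcases p.2.2.1 s v with hc | hc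
      · have hv' : v' = v - (j s : ZMod n) := by
          apply hcan p
          linear_combination -h3 - hc
        have hs : s = s' := hlayer p s s' v v' (Or.inr hv') h1
        exact Or.inr ⟨hs, Or.inr (by rw [hv', sub_add_cancel])⟩
      · have hv' : v' = v + (j s : ZMod n) := by
          apply hcan p
          linear_combination -h3 - hc
        have hs : s = s' := hlayer p s s' v v' (Or.inl hv') h1
        exact Or.inr ⟨hs, Or.inl hv'⟩
  · rintro (⟨h1, h2⟩ | ⟨h1, h2 | h2⟩)
    · subst h1
      exact Or.inl ⟨rfl, fun hc => h2 (p.2.2.2 v hc)⟩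
    · subst h1; subst h2
      rcases p.2.2.1 s v with h | h
      · refine Or.inr ⟨(p.2.1 s v).symm, Or.inl ?_⟩
        dsimp only
        linear_combination -h
      · refine Or.inr ⟨(p.2.1 s v).symm, Or.inr ?_⟩
        dsimp only
        linear_combination -h
    · subst h1; subst h2
      rcases p.2.2.1 s (v' + (j s : ZMod n)) with h | h
      all_goals rw [p.2.1 s v'] at h
      · refine Or.inr ⟨p.2.1 s v', Or.inr ?_⟩
        dsimp only
        rw [p.2.1 s v']
        linear_combination -h
      · refine Or.inr ⟨p.2.1 s v', Or.inl ?_⟩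
        dsimp only
        rw [p.2.1 s v']
        linear_combination -h

end GIaux4

namespace GIaux5
open GIaux4

variable {n t : ℕ} {j : Fin t → ℤ}

noncomputable def ofData (hn : 3 ≤ n) (hj : ∀ s, 0 < j s ∧ 2 * j s < (n : ℤ))
    (p : PDataT n t j) : GI n t j ≃g GI n t j :=
  letI : NeZero n := ⟨by omega⟩
  { toEquiv := Equiv.ofBijective (ofDataFun p)
      ((Finite.injective_iff_bijective).mp (ofData_inj p)),
    map_rel_iff' := fun {x y} => ofData_adj hn hj p x y }

lemma ofData_apply (hn : 3 ≤ n) (hj : ∀ s, 0 < j s ∧ 2 * j s < (n : ℤ))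
    (p : PDataT n t j) (x : Fin t × ZMod n) : ofData hn hj p x = ofDataFun p x := rfl

lemma ofData_bij (hn : 3 ≤ n) (ht : 1 ≤ t) (hj : ∀ s, 0 < j s ∧ 2 * j s < (n : ℤ))
    (hconn : (GI n t j).Connected)
    (hresp : ∀ φ : GI n t j ≃g GI n t j, RespectsPart n t j (fun x => φ x)) :
    Function.Bijective (ofData (n := n) (t := t) (j := j) hn hj) := by
  constructor
  · intro p q h
    have hx : ∀ x, ofDataFun p x = ofDataFun q x := by
      intro x
      have := congrArg (fun ψ : GI n t j ≃g GI n t j => ψ x) h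
      simpa only [ofData_apply] using this
    apply Subtype.ext
    have hb : p.1.1 = q.1.1 := by
      have := congrArg Prod.snd (hx (⟨0, ht⟩, 0))
      simpa [ofDataFun] using this
    have ha : p.1.2.1 = q.1.2.1 := by
      apply Units.ext
      have := congrArg Prod.snd (hx (⟨0, ht⟩, 1))
      simp only [ofDataFun, mul_one] at this
      rw [hb] at this
      exact add_right_cancel this
    have hσ : p.1.2.2 = q.1.2.2 := by
      funext s v
      exact congrArg Prod.fst (hx (s, v))
    exact Prod.ext hb (Prod.ext ha hσ)
  · intro φ
    obtain ⟨a, b, hcond, hsnd⟩ := GIaux3.exists_data hn ht hj hconn φ (hresp φ)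
    refine ⟨⟨(b, a, fun s v => (φ (s, v)).1), hcond⟩, ?_⟩
    apply RelIso.ext
    rintro ⟨s, v⟩
    show ofDataFun _ (s, v) = φ (s, v)
    exact Prod.ext rfl (hsnd s v).symm

def QDataT (n t : ℕ) (j : Fin t → ℤ) :=
  {q : (ZMod n)ˣ × (Fin t → ZMod n → Fin t) // DataCond n j q.1 q.2}

def BT (n t : ℕ) (j : Fin t → ℤ) :=
  {a : (ZMod n)ˣ // ∃ β : Fin t ≃ Fin t, ∀ s,
    (a : ZMod n) * (j s : ZMod n) = (j (β s) : ZMod n) ∨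
    (a : ZMod n) * (j s : ZMod n) = -((j (β s) : ZMod n))}

def T1 (n t : ℕ) (j : Fin t → ℤ) := {σ : Fin t → ZMod n → Fin t // DataCond n j 1 σ}

def e1 : PDataT n t j ≃ ZMod n × QDataT n t j where
  toFun p := (p.1.1, ⟨(p.1.2.1, p.1.2.2), p.2⟩)
  invFun q := ⟨(q.1, q.2.1.1, q.2.1.2), q.2.2⟩
  left_inv p := rfl
  right_inv q := rfl

lemma mem_B {a : (ZMod n)ˣ} {σ : Fin t → ZMod n → Fin t}
    (hc : DataCond n j (a : ZMod n) σ) :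
    ∃ β : Fin t ≃ Fin t, ∀ s,
      (a : ZMod n) * (j s : ZMod n) = (j (β s) : ZMod n) ∨
      (a : ZMod n) * (j s : ZMod n) = -((j (β s) : ZMod n)) := by
  refine ⟨Equiv.ofBijective (fun s => σ s 0)
    ((Finite.injective_iff_bijective).mp (hc.2.2 0)), ?_⟩
  intro s
  rcases hc.2.1 s 0 with h | h
  · exact Or.inl h.symm
  · right
    rw [Equiv.ofBijective_apply, h, neg_neg]

noncomputable def chooseB (a : BT n t j) : Fin t ≃ Fin t := Classical.choose a.2

lemma chooseB_spec (a : BT n t j) : ∀ s,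
    (a.1 : ZMod n) * (j s : ZMod n) = (j ((chooseB a) s) : ZMod n) ∨
    (a.1 : ZMod n) * (j s : ZMod n) = -((j ((chooseB a) s) : ZMod n)) :=
  Classical.choose_spec a.2

noncomputable def BTmap (x : BT n t j × T1 n t j) : QDataT n t j := by
  refine ⟨(x.1.1, fun s v => (chooseB x.1) (x.2.1 s v)), ?_, ?_, ?_⟩
  · intro s v
    exact congrArg (chooseB x.1) (x.2.2.1 s v)
  · intro s v
    have h1 := chooseB_spec x.1 (x.2.1 s v)
    have h2 := x.2.2.2.1 s v
    rcases h1 with h1 | h1 <;> rcases h2 with h2 | h2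
    · left; linear_combination -h1 + (x.1.1 : ZMod n) * h2
    · right; linear_combination -h1 + (x.1.1 : ZMod n) * h2
    · right; linear_combination h1 - (x.1.1 : ZMod n) * h2
    · left; linear_combination h1 - (x.1.1 : ZMod n) * h2
  · intro v s s' h
    dsimp only at h
    exact x.2.2.2.2 v ((chooseB x.1).injective h)

lemma BTmap_bij : Function.Bijective (BTmap (n := n) (t := t) (j := j)) := by
  constructor
  · rintro ⟨⟨a, pa⟩, τ⟩ ⟨⟨a', pa'⟩, τ'⟩ h
    have h1 : a = a' := congrArg (fun q : QDataT n t j => q.1.1) h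
    subst h1
    have h2 : (⟨a, pa⟩ : BT n t j) = ⟨a, pa'⟩ := Subtype.ext rfl
    cases h2
    have h3 := congrArg (fun q : QDataT n t j => q.1.2) h
    have hτ : τ.1 = τ'.1 := by
      funext s v
      exact (chooseB ⟨a, pa⟩).injective (congrFun (congrFun h3 s) v)
    rw [Subtype.ext hτ]
  · rintro ⟨⟨a, σ⟩, hc⟩
    have pB := mem_B hc
    set β := chooseB (⟨a, pB⟩ : BT n t j) with hβdef
    have hβ := chooseB_spec (⟨a, pB⟩ : BT n t j)
    have hacan : ∀ x y : ZMod n, (a : ZMod n) * x = (a : ZMod n) * y → x = y :=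
      fun x y hxy => a.isUnit.mul_left_cancel hxy
    have hτcond : DataCond n j (1 : ZMod n) (fun s v => β.symm (σ s v)) := by
      refine ⟨?_, ?_, ?_⟩
      · intro s v
        exact congrArg β.symm (hc.1 s v)
      · intro s v
        have h1 := hβ (β.symm (σ s v))
        rw [Equiv.apply_symm_apply] at h1
        have h2 := hc.2.1 s v
        rcases h1 with h1 | h1 <;> rcases h2 with h2 | h2
        · left; rw [one_mul]; apply hacan; linear_combination h1 + h2
        · right; rw [one_mul]; apply hacan; linear_combination h1 + h2
        · right; rw [one_mul]; apply hacan; linear_combination h1 - h2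
        · left; rw [one_mul]; apply hacan; linear_combination h1 - h2
      · intro v s s' h
        dsimp only at h
        exact hc.2.2 v (β.symm.injective h)
    refine ⟨(⟨a, pB⟩, ⟨fun s v => β.symm (σ s v), hτcond⟩), ?_⟩
    apply Subtype.ext
    refine Prod.ext rfl ?_
    funext s v
    exact Equiv.apply_symm_apply β (σ s v)

end GIaux5

namespace GIaux6
open GIaux5

variable {n t : ℕ} {j : Fin t → ℤ}

lemma gdvd (n : ℕ) (c : ℤ) : (Int.gcd (n : ℤ) c) ∣ n := by
  have h := Int.gcd_dvd_left (a := (n : ℤ)) (b := c)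
  exact_mod_cast h

def cmap (n : ℕ) (c : ℤ) : ZMod n →+* ZMod (Int.gcd (n : ℤ) c) :=
  ZMod.castHom (gdvd n c) _

lemma gne (hn : 3 ≤ n) (c : ℤ) : Int.gcd (n : ℤ) c ≠ 0 := by
  intro h
  rw [Int.gcd_eq_zero_iff] at h
  have := h.1
  simp at this
  omega

def PiT (n t : ℕ) (j : Fin t → ℤ) :=
  (c : {c : ℤ // c ∈ Finset.univ.image j}) → ZMod (Int.gcd (n : ℤ) c.1) →
    ({s : Fin t // j s = c.1} ≃ {s : Fin t // j s = c.1})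

def PHfun (F : PiT n t j) (s : Fin t) (v : ZMod n) : Fin t :=
  (F ⟨j s, Finset.mem_image_of_mem j (Finset.mem_univ s)⟩ (cmap n (j s) v) ⟨s, rfl⟩).1

lemma cmap_jz (s : Fin t) : cmap n (j s) ((j s : ZMod n)) = 0 := by
  rw [show ((j s : ZMod n)) = (((j s : ℤ) : ℤ) : ZMod n) from rfl]
  rw [map_intCast]
  rw [ZMod.intCast_zmod_eq_zero_iff_dvd]
  exact_mod_cast Int.gcd_dvd_right (a := (n : ℤ)) (b := j s)

lemma cmap_val (hn : 3 ≤ n) (c : ℤ) (v : ZMod n) :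
    cmap n c (((cmap n c v).val : ℕ) : ZMod n) = cmap n c v := by
  haveI : NeZero (Int.gcd (n : ℤ) c) := ⟨gne hn c⟩
  rw [map_natCast]
  exact ZMod.natCast_rightInverse _

lemma PH_eval (hn : 3 ≤ n) (F : PiT n t j) (c : {c : ℤ // c ∈ Finset.univ.image j})
    (s : Fin t) (hs : j s = c.1) (i : ZMod (Int.gcd (n : ℤ) c.1)) :
    (F c i ⟨s, hs⟩).1 = PHfun F s ((i.val : ℕ) : ZMod n) := by
  obtain ⟨cv, cm⟩ := c
  dsimp only at hs i
  subst hs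
  haveI : NeZero (Int.gcd (n : ℤ) (j s)) := ⟨gne hn (j s)⟩
  have h1 : cmap n (j s) ((i.val : ℕ) : ZMod n) = i := by
    rw [map_natCast]
    exact ZMod.natCast_rightInverse i
  unfold PHfun
  rw [h1]

lemma PH_eval2 (F : PiT n t j) (c c' : {c : ℤ // c ∈ Finset.univ.image j}) (e : c = c')
    (s : Fin t) (hs : j s = c.1) (v : ZMod n) :
    (F c (cmap n c.1 v) ⟨s, hs⟩).1 = (F c' (cmap n c'.1 v) ⟨s, by rw [hs, e]⟩).1 := by
  subst e; rfl

/-- invariance of layer functions under the kernel of cmap -/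
lemma INVmod (hn : 3 ≤ n) {σ : Fin t → ZMod n → Fin t}
    (hσ : ∀ s v, σ s (v + (j s : ZMod n)) = σ s v) (s : Fin t) {v w : ZMod n}
    (h : cmap n (j s) v = cmap n (j s) w) : σ s v = σ s w := by
  haveI : NeZero n := ⟨by omega⟩
  haveI : NeZero (Int.gcd (n : ℤ) (j s)) := ⟨gne hn (j s)⟩
  set x := v - w with hx
  have hker : cmap n (j s) x = 0 := by rw [hx, map_sub, h, sub_self]
  have hval : ((x.val : ℕ) : ZMod n) = x := ZMod.natCast_rightInverse x
  have h2 : ((x.val : ℕ) : ZMod (Int.gcd (n : ℤ) (j s))) = 0 := by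
    have := congrArg (cmap n (j s)) hval
    rw [map_natCast] at this
    rw [this, hker]
  rw [ZMod.natCast_eq_zero_iff] at h2
  obtain ⟨e, he⟩ := h2
  have hmem : x ∈ AddSubgroup.closure {((j s : ℤ) : ZMod n)} := by
    rw [← hval]
    have hxe : ((x.val : ℕ) : ZMod n) = (((Int.gcd (n : ℤ) (j s) * e : ℕ) : ℤ) : ZMod n) := by
      rw [he]; push_cast; ring
    rw [hxe]
    exact GIaux2.dvd_mem ⟨e, by push_cast; ring⟩
  have := GIaux.stepInv (σ s) _ (fun u => hσ s u) x hmem w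
  rw [show w + x = v from by rw [hx]; ring] at this
  exact this

lemma PHcond (F : PiT n t j) : DataCond n j (1 : ZMod n) (PHfun F) := by
  refine ⟨?_, ?_, ?_⟩
  · intro s v
    unfold PHfun
    have h1 : cmap n (j s) (v + (j s : ZMod n)) = cmap n (j s) v := by
      rw [map_add, cmap_jz, add_zero]
    rw [h1]
  · intro s v
    left
    rw [one_mul]
    have := (F ⟨j s, Finset.mem_image_of_mem j (Finset.mem_univ s)⟩ (cmap n (j s) v) ⟨s, rfl⟩).2
    unfold PHfun
    rw [this]
  · intro v s s' h
    dsimp only at h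
    have hjs : j (PHfun F s v) = j s :=
      (F ⟨j s, Finset.mem_image_of_mem j (Finset.mem_univ s)⟩ (cmap n (j s) v) ⟨s, rfl⟩).2
    have hjs' : j (PHfun F s' v) = j s' :=
      (F ⟨j s', Finset.mem_image_of_mem j (Finset.mem_univ s')⟩ (cmap n (j s') v) ⟨s', rfl⟩).2
    have hjj : j s = j s' := by rw [← hjs, ← hjs', h]
    -- transport s' into the class of s
    have e : (⟨j s', Finset.mem_image_of_mem j (Finset.mem_univ s')⟩ :
        {c : ℤ // c ∈ Finset.univ.image j}) =
        ⟨j s, Finset.mem_image_of_mem j (Finset.mem_univ s)⟩ := Subtype.ext hjj.symm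
    have h2 : PHfun F s' v =
        (F ⟨j s, Finset.mem_image_of_mem j (Finset.mem_univ s)⟩ (cmap n (j s) v)
          ⟨s', hjj.symm⟩).1 := by
      unfold PHfun
      rw [PH_eval2 F _ _ e s' rfl v]
    rw [h2] at h
    have h3 : (F ⟨j s, Finset.mem_image_of_mem j (Finset.mem_univ s)⟩ (cmap n (j s) v)
        ⟨s, rfl⟩) = (F ⟨j s, Finset.mem_image_of_mem j (Finset.mem_univ s)⟩ (cmap n (j s) v)
        ⟨s', hjj.symm⟩) := Subtype.ext h
    have h4 := (F ⟨j s, Finset.mem_image_of_mem j (Finset.mem_univ s)⟩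
      (cmap n (j s) v)).injective h3
    exact congrArg Subtype.val h4

noncomputable def PHmap (F : PiT n t j) : T1 n t j := ⟨PHfun F, PHcond F⟩

lemma intEq (hn : 3 ≤ n) (hj : ∀ s, 0 < j s ∧ 2 * j s < (n : ℤ)) {σ : Fin t → ZMod n → Fin t}
    (hσ : DataCond n j (1 : ZMod n) σ) : ∀ s v, j (σ s v) = j s := by
  intro s v
  refine GIaux.rig (hj _).1 (hj _).2 (hj s).1 (hj s).2 ?_
  have := hσ.2.1 s v
  simpa [one_mul] using this

lemma PH_bij (hn : 3 ≤ n) (hj : ∀ s, 0 < j s ∧ 2 * j s < (n : ℤ)) :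
    Function.Bijective (PHmap (n := n) (t := t) (j := j)) := by
  constructor
  · intro F F' h
    have h1 : PHfun F = PHfun F' := congrArg Subtype.val h
    funext c i
    apply Equiv.ext
    rintro ⟨s, hs⟩
    apply Subtype.ext
    rw [PH_eval hn F c s hs i, PH_eval hn F' c s hs i, h1]
  · rintro ⟨σ, hσ⟩
    have hint := intEq hn hj hσ
    set F : PiT n t j := fun c i => Equiv.ofBijective
      (fun x => ⟨σ x.1 ((i.val : ℕ) : ZMod n), by rw [hint x.1]; exact x.2⟩)
      ((Finite.injective_iff_bijective).mp
        (fun x y hxy => Subtype.ext (hσ.2.2 _ (congrArg Subtype.val hxy)))) with hF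
    refine ⟨F, ?_⟩
    apply Subtype.ext
    funext s v
    show (F ⟨j s, Finset.mem_image_of_mem j (Finset.mem_univ s)⟩
      (cmap n (j s) v) ⟨s, rfl⟩).1 = σ s v
    simp only [hF, Equiv.ofBijective_apply]
    exact INVmod hn hσ.1 s (cmap_val hn (j s) v)

lemma card_T1 (hn : 3 ≤ n) (hj : ∀ s, 0 < j s ∧ 2 * j s < (n : ℤ)) :
    Nat.card (T1 n t j) =
      ∏ c ∈ Finset.univ.image j,
        (Nat.factorial ((Finset.univ.filter (fun s => j s = c)).card)) ^
          (Int.gcd (n : ℤ) c) := by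
  rw [← Nat.card_eq_of_bijective _ (PH_bij hn hj)]
  rw [show (PiT n t j) = ((c : {c : ℤ // c ∈ Finset.univ.image j}) →
    ZMod (Int.gcd (n : ℤ) c.1) → ({s : Fin t // j s = c.1} ≃ {s : Fin t // j s = c.1}))
    from rfl]
  rw [Nat.card_pi]
  rw [← Finset.prod_coe_sort (Finset.univ.image j) (fun c =>
    (Nat.factorial ((Finset.univ.filter (fun s => j s = c)).card)) ^ (Int.gcd (n : ℤ) c))]
  apply Finset.prod_congr rfl
  intro c _
  haveI : NeZero (Int.gcd (n : ℤ) c.1) := ⟨gne hn c.1⟩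
  rw [Nat.card_fun, Nat.card_zmod, Nat.card_eq_fintype_card,
    Fintype.card_equiv (Equiv.refl _), Fintype.card_subtype]
end GIaux6


/-- if `0 < j s < n/2` for all `s`, and `GI(n;j)` is connected with every
automorphism respecting the fundamental edge-partition, then the automorphism group has
order `n·|B|·∏_c (m_c)!^{d_c}`, the product over the distinct values `c` of `j`, where
`m_c` is the multiplicity of `c` in `j`, `d_c = gcd(n,c)`, and `B` is the set of units
`a` admitting a bijection `β` with `a·(j s) ≡ ±j (β s) (mod n)` for all `s`. -/
theorem GI_aut_card_general (n t : ℕ) (hn : 3 ≤ n) (ht : 1 ≤ t) (j : Fin t → ℤ)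
    (hj : ∀ s, 0 < j s ∧ 2 * j s < (n : ℤ))
    (hconn : (GI n t j).Connected)
    (hresp : ∀ φ : GI n t j ≃g GI n t j, RespectsPart n t j (fun x => φ x)) :
    Nat.card (GI n t j ≃g GI n t j) =
      n * Nat.card {a : (ZMod n)ˣ // ∃ β : Fin t ≃ Fin t, ∀ s,
            (a : ZMod n) * (j s : ZMod n) = (j (β s) : ZMod n) ∨
            (a : ZMod n) * (j s : ZMod n) = -((j (β s) : ZMod n))} *
        ∏ c ∈ Finset.univ.image j,
          (Nat.factorial ((Finset.univ.filter (fun s => j s = c)).card)) ^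
            (Int.gcd (n : ℤ) c) := by
  haveI : NeZero n := ⟨by omega⟩
  have h1 : Nat.card (GIaux4.PDataT n t j) = Nat.card (GI n t j ≃g GI n t j) :=
    Nat.card_eq_of_bijective _ (GIaux5.ofData_bij hn ht hj hconn hresp)
  have h2 : Nat.card (GIaux4.PDataT n t j) =
      Nat.card (ZMod n × GIaux5.QDataT n t j) := Nat.card_congr GIaux5.e1
  have h3 : Nat.card (GIaux5.BT n t j × GIaux5.T1 n t j) =
      Nat.card (GIaux5.QDataT n t j) :=
    Nat.card_eq_of_bijective _ GIaux5.BTmap_bij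
  have hBT : Nat.card (GIaux5.BT n t j) =
      Nat.card {a : (ZMod n)ˣ // ∃ β : Fin t ≃ Fin t, ∀ s,
        (a : ZMod n) * (j s : ZMod n) = (j (β s) : ZMod n) ∨
        (a : ZMod n) * (j s : ZMod n) = -((j (β s) : ZMod n))} := rfl
  rw [← h1, h2, Nat.card_prod, ← h3, Nat.card_prod, Nat.card_zmod,
    GIaux6.card_T1 hn hj, hBT]
  ring
end

section
/- Let n ≥ 3, t ≥ 1, and let j : Fin t → ℤ satisfy j s ≢ 0 (mod n) and 2·(j s) ≢ 0 (mod n) for all s, such that j is injective modulo n. Let J = {(j s : ZMod n) : s ∈ Fin t} and suppose (a) J ∩ (−J) = ∅ and (b) J ∪ (−J) is the underlying set of a subgroup of the unit group (ZMod n)ˣ. Then GI(n;j) is vertex-transitive. -/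
open SimpleGraph

/-- if `J ∩ -J = ∅` and `J ∪ -J` is the underlying set of a subgroup of
`(ZMod n)ˣ`, then `GI(n;j)` is vertex-transitive. -/
theorem GI_vt_of_subgroup (n t : ℕ) (hn : 3 ≤ n) (ht : 1 ≤ t) (j : Fin t → ℤ)
    (hj : ∀ s, (j s : ZMod n) ≠ 0 ∧ ((2 * j s : ℤ) : ZMod n) ≠ 0)
    (hinj : ∀ s s' : Fin t, (j s : ZMod n) = (j s' : ZMod n) → s = s')
    (hdisj : Jset n j ∩ (Neg.neg '' Jset n j) = ∅)
    (hU : ∃ U : Subgroup (ZMod n)ˣ, Units.val '' (U : Set (ZMod n)ˣ) = JJset n j) :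
    IsVertexTransitive (GI n t j) := by
  obtain ⟨U, hUJ⟩ := hU
  haveI : NeZero n := ⟨by omega⟩
  have hx0 : ∀ s, (j s : ZMod n) ≠ 0 := fun s => (hj s).1
  have key : ∀ a b : Fin t,
      ((j a : ZMod n) = (j b : ZMod n) ∨ (j a : ZMod n) = -(j b : ZMod n)) → a = b := by
    rintro a b (h | h)
    · exact hinj a b h
    · exfalso
      have hm : ((j a : ZMod n)) ∈ Jset n j ∩ (Neg.neg '' Jset n j) :=
        ⟨⟨a, rfl⟩, ⟨(j b : ZMod n), ⟨b, rfl⟩, h.symm⟩⟩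
      rw [hdisj] at hm
      exact hm
  have cancel : ∀ (u : (ZMod n)ˣ) (x y : ZMod n),
      (u : ZMod n) * x = (u : ZMod n) * y → x = y := by
    intro u x y h
    have h2 := congrArg (fun z => ((u⁻¹ : (ZMod n)ˣ) : ZMod n) * z) h
    simpa [← mul_assoc, Units.inv_mul] using h2
  have adj_iff : ∀ (p q : Fin t × ZMod n), (GI n t j).Adj p q ↔
      (p.2 = q.2 ∧ p.1 ≠ q.1) ∨
      (p.1 = q.1 ∧ (q.2 = p.2 + (j p.1 : ZMod n) ∨ p.2 = q.2 + (j p.1 : ZMod n))) := by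
    rintro ⟨s, v⟩ ⟨s', v'⟩
    show (SimpleGraph.fromRel _).Adj _ _ ↔ _
    rw [SimpleGraph.fromRel_adj]
    dsimp only
    constructor
    · rintro ⟨hne, (⟨hv, hs⟩ | ⟨hs, hv⟩) | (⟨hv, hs⟩ | ⟨hs, hv⟩)⟩
      · exact Or.inl ⟨hv, hs⟩
      · exact Or.inr ⟨hs, Or.inl hv⟩
      · exact Or.inl ⟨hv.symm, hs.symm⟩
      · subst hs
        exact Or.inr ⟨rfl, Or.inr hv⟩
    · rintro (⟨hv, hs⟩ | ⟨rfl, hv | hv⟩)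
      · exact ⟨fun h => hs (congrArg Prod.fst h), Or.inl (Or.inl ⟨hv, hs⟩)⟩
      · refine ⟨fun h => ?_, Or.inl (Or.inr ⟨rfl, hv⟩)⟩
        have h2 : v = v' := congrArg Prod.snd h
        rw [hv] at h2
        exact hx0 s (by rwa [left_eq_add] at h2)
      · refine ⟨fun h => ?_, Or.inr (Or.inr ⟨rfl, hv⟩)⟩
        have h2 : v = v' := congrArg Prod.snd h
        rw [h2] at hv
        exact hx0 s (by rwa [left_eq_add] at hv)
  have hwmem : ∀ s : Fin t, ∃ u : (ZMod n)ˣ, u ∈ U ∧ (u : ZMod n) = (j s : ZMod n) := by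
    intro s
    have hm : (j s : ZMod n) ∈ Units.val '' (U : Set (ZMod n)ˣ) := by
      rw [hUJ]
      exact Set.mem_union_left _ ⟨s, rfl⟩
    obtain ⟨u, hu1, hu2⟩ := hm
    exact ⟨u, hu1, hu2⟩
  choose w hw1 hw2 using hwmem
  have step : ∀ u : (ZMod n)ˣ, u ∈ U → ∀ s : Fin t, ∃ s',
      (u : ZMod n) * (j s : ZMod n) = (j s' : ZMod n) ∨
      (u : ZMod n) * (j s : ZMod n) = -(j s' : ZMod n) := by
    intro u hu s
    have hmem : (((u * w s : (ZMod n)ˣ) : ZMod n)) ∈ JJset n j := by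
      rw [← hUJ]
      exact ⟨u * w s, mul_mem hu (hw1 s), rfl⟩
    have hval : ((u * w s : (ZMod n)ˣ) : ZMod n) = (u : ZMod n) * (j s : ZMod n) := by
      rw [Units.val_mul, hw2]
    rw [hval] at hmem
    rcases hmem with ⟨s', hs'⟩ | ⟨x, ⟨s', rfl⟩, hx⟩
    · exact ⟨s', Or.inl hs'.symm⟩
    · exact ⟨s', Or.inr hx.symm⟩
  choose σ hσ using step
  have σinj : ∀ (u) (hu : u ∈ U) (a b : Fin t), σ u hu a = σ u hu b → a = b := by
    intro u hu a b hab
    rcases hσ u hu a with ha | ha <;> rcases hσ u hu b with hb | hb <;> rw [hab] at ha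
    · exact key a b (Or.inl (cancel u _ _ (ha.trans hb.symm)))
    · have hb' : (u : ZMod n) * (-(j b : ZMod n)) = (j (σ u hu b) : ZMod n) := by
        rw [mul_neg, hb, neg_neg]
      exact key a b (Or.inr (cancel u _ _ (ha.trans hb'.symm)))
    · have hb' : (u : ZMod n) * (-(j b : ZMod n)) = -(j (σ u hu b) : ZMod n) := by
        rw [mul_neg, hb]
      exact key a b (Or.inr (cancel u _ _ (ha.trans hb'.symm)))
    · exact key a b (Or.inl (cancel u _ _ (ha.trans hb.symm)))
  have adjpres : ∀ (u) (hu : u ∈ U) (c : ZMod n) (p q : Fin t × ZMod n),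
      (GI n t j).Adj p q →
      (GI n t j).Adj (σ u hu p.1, (u : ZMod n) * p.2 + c)
        (σ u hu q.1, (u : ZMod n) * q.2 + c) := by
    intro u hu c p q hpq
    rw [adj_iff] at hpq ⊢
    dsimp only
    rcases hpq with ⟨hv, hs⟩ | ⟨hs, hv | hv⟩
    · exact Or.inl ⟨by rw [hv], fun h => hs (σinj u hu _ _ h)⟩
    · refine Or.inr ⟨by rw [hs], ?_⟩
      rcases hσ u hu p.1 with h | h
      · left; rw [hv, mul_add, h]; ring
      · right; rw [hv, mul_add, h]; ring
    · refine Or.inr ⟨by rw [hs], ?_⟩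
      rcases hσ u hu p.1 with h | h
      · right; rw [hv, mul_add, h]; ring
      · left; rw [hv, mul_add, h]; ring
  have σσ : ∀ (u) (hu : u ∈ U) (s : Fin t), σ u⁻¹ (inv_mem hu) (σ u hu s) = s := by
    intro u hu s
    rcases hσ u hu s with h | h <;> rcases hσ u⁻¹ (inv_mem hu) (σ u hu s) with h2 | h2
    · rw [← h, ← mul_assoc, Units.inv_mul, one_mul] at h2
      exact key _ _ (Or.inl h2.symm)
    · rw [← h, ← mul_assoc, Units.inv_mul, one_mul] at h2
      exact key _ _ (Or.inr (by rw [h2, neg_neg]))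
    · have h3 : ((u⁻¹ : (ZMod n)ˣ) : ZMod n) * (j (σ u hu s) : ZMod n) = -(j s : ZMod n) := by
        rw [← neg_neg ((j (σ u hu s) : ZMod n)), ← h, mul_neg, ← mul_assoc,
          Units.inv_mul, one_mul]
      rw [h3] at h2
      exact key _ _ (Or.inr h2.symm)
    · have h3 : ((u⁻¹ : (ZMod n)ˣ) : ZMod n) * (j (σ u hu s) : ZMod n) = -(j s : ZMod n) := by
        rw [← neg_neg ((j (σ u hu s) : ZMod n)), ← h, mul_neg, ← mul_assoc,
          Units.inv_mul, one_mul]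
      rw [h3] at h2
      exact key _ _ (Or.inl (neg_injective h2).symm)
  have main : ∀ (u) (hu : u ∈ U) (c : ZMod n), ∃ φ : GI n t j ≃g GI n t j,
      ∀ p : Fin t × ZMod n, φ p = (σ u hu p.1, (u : ZMod n) * p.2 + c) := by
    intro u hu c
    set f : Fin t × ZMod n → Fin t × ZMod n :=
      fun p => (σ u hu p.1, (u : ZMod n) * p.2 + c) with hf
    have e : ∀ r : Fin t × ZMod n,
        (σ u⁻¹ (inv_mem hu) (f r).1,
          ((u⁻¹ : (ZMod n)ˣ) : ZMod n) * (f r).2 + (-(((u⁻¹ : (ZMod n)ˣ) : ZMod n)) * c))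
          = r := by
      intro r
      refine Prod.ext (σσ u hu r.1) ?_
      show ((u⁻¹ : (ZMod n)ˣ) : ZMod n) * ((u : ZMod n) * r.2 + c) +
        (-(((u⁻¹ : (ZMod n)ˣ) : ZMod n)) * c) = r.2
      rw [mul_add, ← mul_assoc, Units.inv_mul, one_mul]
      ring
    have hinjf : Function.Injective f := by
      intro a b hab
      rw [← e a, ← e b, hab]
    have hbij : Function.Bijective f := Finite.injective_iff_bijective.mp hinjf
    refine ⟨⟨Equiv.ofBijective f hbij, ?_⟩, fun p => rfl⟩
    intro p q
    constructor
    · intro h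
      have h2 := adjpres u⁻¹ (inv_mem hu) (-(((u⁻¹ : (ZMod n)ˣ) : ZMod n)) * c) (f p) (f q) h
      rwa [e p, e q] at h2
    · intro h
      exact adjpres u hu c p q h
  intro x y
  have huU : w y.1 * (w x.1)⁻¹ ∈ U := mul_mem (hw1 y.1) (inv_mem (hw1 x.1))
  obtain ⟨φ, hφ⟩ := main (w y.1 * (w x.1)⁻¹) huU
    (y.2 - ((w y.1 * (w x.1)⁻¹ : (ZMod n)ˣ) : ZMod n) * x.2)
  have hc : ((w y.1 * (w x.1)⁻¹ : (ZMod n)ˣ) : ZMod n) * (j x.1 : ZMod n)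
      = (j y.1 : ZMod n) := by
    rw [Units.val_mul, mul_assoc, ← hw2 x.1, Units.inv_mul, mul_one, hw2]
  have hσx : σ (w y.1 * (w x.1)⁻¹) huU x.1 = y.1 := by
    rcases hσ (w y.1 * (w x.1)⁻¹) huU x.1 with h | h
    · exact key _ _ (Or.inl (h.symm.trans hc))
    · exact (key _ _ (Or.inr (hc.symm.trans h))).symm
  refine ⟨φ, ?_⟩
  rw [hφ x]
  refine Prod.ext hσx ?_
  show ((w y.1 * (w x.1)⁻¹ : (ZMod n)ˣ) : ZMod n) * x.2 +
    (y.2 - ((w y.1 * (w x.1)⁻¹ : (ZMod n)ˣ) : ZMod n) * x.2) = y.2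
  ring
end

section
/- Let n ≥ 3, t ≥ 1, and let j : Fin t → ℤ satisfy j s ≢ 0 (mod n) and 2·(j s) ≢ 0 (mod n) for all s, with X = GI(n;j) connected and vertex-transitive. If the automorphism group of X has a subgroup H that acts transitively on the vertices and every element of H respects the fundamental edge-partition, then for every integer k ≥ 1 the graph GI(n;[k]j) is vertex-transitive. -/
open SimpleGraph

lemma GI_adj (n m : ℕ) (J : Fin m → ℤ) (x y : Fin m × ZMod n) :
    (GI n m J).Adj x y ↔ x ≠ y ∧ ((x.2 = y.2 ∧ x.1 ≠ y.1) ∨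
      (x.1 = y.1 ∧ (y.2 = x.2 + (J x.1 : ZMod n) ∨ x.2 = y.2 + (J y.1 : ZMod n)))) := by
  rw [GI, SimpleGraph.fromRel_adj]
  constructor
  · rintro ⟨hne, (⟨h1, h2⟩ | ⟨h1, h2⟩) | (⟨h1, h2⟩ | ⟨h1, h2⟩)⟩
    · exact ⟨hne, Or.inl ⟨h1, h2⟩⟩
    · exact ⟨hne, Or.inr ⟨h1, Or.inl h2⟩⟩
    · exact ⟨hne, Or.inl ⟨h1.symm, h2.symm⟩⟩
    · exact ⟨hne, Or.inr ⟨h1.symm, Or.inr h2⟩⟩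
  · rintro ⟨hne, ⟨h1, h2⟩ | ⟨h1, h2 | h2⟩⟩
    · exact ⟨hne, Or.inl (Or.inl ⟨h1, h2⟩)⟩
    · exact ⟨hne, Or.inl (Or.inr ⟨h1, h2⟩)⟩
    · exact ⟨hne, Or.inr (Or.inr ⟨h1.symm, h2⟩)⟩

lemma mod_helper {t : ℕ} (d : ℕ) {c : ℕ} (hc : c < t) : (d * t + c) % t = c := by
  rw [mul_comm, Nat.mul_add_mod, Nat.mod_eq_of_lt hc]

lemma divq_helper {t : ℕ} (ht : 0 < t) (d : ℕ) {c : ℕ} (hc : c < t) : (d * t + c) / t = d := by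
  rw [mul_comm, Nat.mul_add_div ht, Nat.div_eq_of_lt hc, add_zero]

lemma idx_lt {k t : ℕ} (ht : 0 < t) (s : Fin (k * t)) (c : Fin t) :
    (s : ℕ) / t * t + (c : ℕ) < k * t := by
  have hd : (s : ℕ) / t < k := Nat.div_lt_of_lt_mul (lt_of_lt_of_eq s.isLt (Nat.mul_comm k t))
  have h1 : (s : ℕ) / t * t + (c : ℕ) < ((s : ℕ) / t + 1) * t := by
    rw [add_mul, one_mul]; exact Nat.add_lt_add_left c.isLt _
  exact lt_of_lt_of_le h1 (Nat.mul_le_mul_right t hd)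

def liftFun (n t k : ℕ) (ht : 0 < t) (f : Fin t × ZMod n → Fin t × ZMod n) :
    Fin (k * t) × ZMod n → Fin (k * t) × ZMod n :=
  fun x =>
    (⟨(x.1 : ℕ) / t * t + ((f (⟨(x.1 : ℕ) % t, Nat.mod_lt _ ht⟩, x.2)).1 : ℕ),
      idx_lt ht x.1 _⟩,
     (f (⟨(x.1 : ℕ) % t, Nat.mod_lt _ ht⟩, x.2)).2)

lemma liftFun_inv (n t k : ℕ) (ht : 0 < t) (f g : Fin t × ZMod n → Fin t × ZMod n)
    (h : ∀ z, g (f z) = z) :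
    ∀ x, liftFun n t k ht g (liftFun n t k ht f x) = x := by
  rintro ⟨⟨s, hs⟩, v⟩
  set q : Fin t × ZMod n := (⟨s % t, Nat.mod_lt _ ht⟩, v) with hq
  have h1 : (s / t * t + ((f q).1 : ℕ)) % t = ((f q).1 : ℕ) := mod_helper _ (f q).1.isLt
  have h2 : (s / t * t + ((f q).1 : ℕ)) / t = s / t := divq_helper ht _ (f q).1.isLt
  have harg : ((⟨(s / t * t + ((f q).1 : ℕ)) % t, Nat.mod_lt _ ht⟩ : Fin t), (f q).2) = f q :=
    Prod.ext (Fin.ext h1) rfl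
  refine Prod.ext (Fin.ext ?_) ?_
  · show (s / t * t + ((f q).1 : ℕ)) / t * t
        + ((g ((⟨(s / t * t + ((f q).1 : ℕ)) % t, Nat.mod_lt _ ht⟩ : Fin t), (f q).2)).1 : ℕ) = s
    rw [harg, h q, h2]
    exact Nat.div_add_mod' s t
  · show (g ((⟨(s / t * t + ((f q).1 : ℕ)) % t, Nat.mod_lt _ ht⟩ : Fin t), (f q).2)).2 = v
    rw [harg, h q]

def liftPerm (n t k : ℕ) (ht : 0 < t) (π : Equiv.Perm (Fin t × ZMod n)) :
    Equiv.Perm (Fin (k * t) × ZMod n) where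
  toFun := liftFun n t k ht π
  invFun := liftFun n t k ht π.symm
  left_inv := liftFun_inv n t k ht π π.symm (fun z => π.symm_apply_apply z)
  right_inv := liftFun_inv n t k ht π.symm π (fun z => π.apply_symm_apply z)

lemma rep_apply (k t : ℕ) (j : Fin t → ℤ) (ht : 0 < t) (s : Fin (k * t)) :
    rep k t j s = j ⟨(s : ℕ) % t, Nat.mod_lt _ ht⟩ := rfl

lemma lift_adj (n t k : ℕ) (ht : 0 < t) (j : Fin t → ℤ)
    (f : Fin t × ZMod n → Fin t × ZMod n)
    (hA : ∀ x y, (GI n t j).Adj x y → (GI n t j).Adj (f x) (f y))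
    (hR : RespectsPart n t j f) :
    ∀ x y, (GI n (k * t) (rep k t j)).Adj x y →
      (GI n (k * t) (rep k t j)).Adj (liftFun n t k ht f x) (liftFun n t k ht f y) := by
  rintro ⟨⟨s, hs⟩, v⟩ ⟨⟨s', hs'⟩, v'⟩ hxy
  rw [GI_adj] at hxy
  obtain ⟨hne, hcase⟩ := hxy
  simp only [liftFun]
  set b : Fin t := ⟨s % t, Nat.mod_lt _ ht⟩ with hb_def
  set b' : Fin t := ⟨s' % t, Nat.mod_lt _ ht⟩ with hb'_def
  rcases hcase with ⟨hv, hss⟩ | ⟨hss, hlay⟩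
  · -- spoke case
    simp only at hv hss
    have hss' : s ≠ s' := fun h => hss (Fin.ext h)
    by_cases hb : (s : ℕ) % t = s' % t
    · have heq : (b, v) = (b', v') := by
        rw [hv]; exact congrArg (·, v') (Fin.ext hb)
      have heq' : f (⟨s % t, Nat.mod_lt _ ht⟩, v) = f (⟨s' % t, Nat.mod_lt _ ht⟩, v') :=
        congrArg f heq
      have hdd : s / t ≠ s' / t := fun h => hss' (by
        rw [← Nat.div_add_mod s t, ← Nat.div_add_mod s' t, h, hb])
      rw [GI_adj]
      refine ⟨?_, Or.inl ⟨?_, ?_⟩⟩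
      · intro hcontra
        have := congrArg (fun z => ((z.1 : Fin (k*t)) : ℕ)) hcontra
        simp only [heq'] at this
        exact hdd (Nat.eq_of_mul_eq_mul_right ht (Nat.add_right_cancel this))
      · simp only [heq']
      · intro hcontra
        have := congrArg (fun z => ((z : Fin (k*t)) : ℕ)) hcontra
        simp only [heq'] at this
        exact hdd (Nat.eq_of_mul_eq_mul_right ht (Nat.add_right_cancel this))
    · -- base spoke edge
      have hbne : b ≠ b' := fun h => hb (congrArg Fin.val h)
      have hadj : (GI n t j).Adj (b, v) (b', v') := by
        rw [GI_adj]
        exact ⟨fun h => hbne (congrArg Prod.fst h), Or.inl ⟨hv, hbne⟩⟩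
      have himg := hA _ _ hadj
      have hw : (f (b, v)).2 = (f (b', v')).2 := hR.1 _ _ hadj hv
      rw [GI_adj] at himg
      obtain ⟨hne', hc⟩ := himg
      have hcne : (f (b, v)).1 ≠ (f (b', v')).1 := by
        rcases hc with ⟨_, h2⟩ | ⟨h1, _⟩
        · exact h2
        · exact absurd (Prod.ext h1 hw) hne'
      rw [GI_adj]
      refine ⟨?_, Or.inl ⟨hw, ?_⟩⟩
      · intro hcontra
        have := congrArg (fun z => ((z.1 : Fin (k*t)) : ℕ)) hcontra
        simp only at this
        have hcc : ((f (b, v)).1 : ℕ) = ((f (b', v')).1 : ℕ) := by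
          have e1 := mod_helper (s / t) (f (b, v)).1.isLt
          have e2 := mod_helper (s' / t) (f (b', v')).1.isLt
          rw [← e1, ← e2, this]
        exact hcne (Fin.ext hcc)
      · intro hcontra
        have := congrArg (fun z => ((z : Fin (k*t)) : ℕ)) hcontra
        simp only at this
        have hcc : ((f (b, v)).1 : ℕ) = ((f (b', v')).1 : ℕ) := by
          have e1 := mod_helper (s / t) (f (b, v)).1.isLt
          have e2 := mod_helper (s' / t) (f (b', v')).1.isLt
          rw [← e1, ← e2, this]
        exact hcne (Fin.ext hcc)
  · -- layer case
    simp only at hss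
    have hseq : s = s' := congrArg Fin.val hss
    subst hseq
    have hbb : b = b' := rfl
    have hvv : v ≠ v' := fun h => hne (Prod.ext hss (by exact h))
    have hlay' : v' = v + (j b : ZMod n) ∨ v = v' + (j b : ZMod n) := by
      simpa only [rep_apply k t j ht] using hlay
    have hadj : (GI n t j).Adj (b, v) (b, v') := by
      rw [GI_adj]
      exact ⟨fun h => hvv (congrArg Prod.snd h), Or.inr ⟨rfl, hlay'⟩⟩
    have himg := hA _ _ hadj
    have hc : (f (b, v)).1 = (f (b, v')).1 := hR.2 _ _ hadj rfl
    rw [GI_adj] at himg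
    obtain ⟨hne', hcc⟩ := himg
    have hww : (f (b, v)).2 ≠ (f (b, v')).2 := fun h => hne' (Prod.ext hc h)
    have hlay2 : (f (b, v')).2 = (f (b, v)).2 + (j (f (b, v)).1 : ZMod n) ∨
        (f (b, v)).2 = (f (b, v')).2 + (j (f (b, v)).1 : ZMod n) := by
      rcases hcc with ⟨_, h2⟩ | ⟨_, h2⟩
      · exact absurd hc h2
      · rcases h2 with h2 | h2
        · exact Or.inl h2
        · exact Or.inr (by rw [hc]; exact h2)
    rw [GI_adj]
    have hfirst : (⟨s / t * t + ((f (b, v)).1 : ℕ), idx_lt ht ⟨s, hs⟩ _⟩ : Fin (k * t)) =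
        ⟨s / t * t + ((f (b, v')).1 : ℕ), idx_lt ht ⟨s, hs⟩ _⟩ := Fin.ext (by rw [hc])
    have hrep : rep k t j (⟨s / t * t + ((f (b, v)).1 : ℕ), idx_lt ht ⟨s, hs⟩ _⟩ : Fin (k * t)) =
        j (f (b, v)).1 := by
      rw [rep_apply k t j ht]
      exact congrArg j (Fin.ext (mod_helper _ (f (b, v)).1.isLt))
    refine ⟨fun h => hww (Prod.ext_iff.mp h).2, Or.inr ⟨hfirst, ?_⟩⟩
    rcases hlay2 with h2 | h2
    · left; rw [hrep]; exact h2
    · right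
      have hrep' : rep k t j (⟨s / t * t + ((f (b, v')).1 : ℕ), idx_lt ht ⟨s, hs⟩ _⟩ : Fin (k * t)) =
          j (f (b, v)).1 := by
        rw [hc, rep_apply k t j ht]
        exact congrArg j (Fin.ext (mod_helper _ (f (b, v')).1.isLt))
      rw [hrep']; exact h2

def liftIso (n t k : ℕ) (ht : 0 < t) (j : Fin t → ℤ) (π : Equiv.Perm (Fin t × ZMod n))
    (hA : ∀ x y, (GI n t j).Adj x y → (GI n t j).Adj (π x) (π y))
    (hA' : ∀ x y, (GI n t j).Adj x y → (GI n t j).Adj (π.symm x) (π.symm y))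
    (hR : RespectsPart n t j π) (hR' : RespectsPart n t j π.symm) :
    GI n (k * t) (rep k t j) ≃g GI n (k * t) (rep k t j) where
  toEquiv := liftPerm n t k ht π
  map_rel_iff' := by
    intro a b
    constructor
    · intro h
      have h2 := lift_adj n t k ht j π.symm hA' hR' _ _ h
      have hco : ⇑(liftPerm n t k ht π) = liftFun n t k ht ⇑π := rfl
      rw [hco] at h2
      rwa [liftFun_inv n t k ht (⇑π) (⇑π.symm) (fun z => π.symm_apply_apply z) a,
        liftFun_inv n t k ht (⇑π) (⇑π.symm) (fun z => π.symm_apply_apply z) b] at h2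
    · exact lift_adj n t k ht j π hA hR a b

def permFstIso (n m : ℕ) (J : Fin m → ℤ) (σ : Equiv.Perm (Fin m))
    (hσ : ∀ s, J (σ s) = J s) : GI n m J ≃g GI n m J where
  toEquiv := Equiv.prodCongr σ (Equiv.refl (ZMod n))
  map_rel_iff' := by
    rintro ⟨a1, a2⟩ ⟨b1, b2⟩
    rw [GI_adj, GI_adj]
    simp only [Equiv.prodCongr_apply, Equiv.coe_refl, Prod.map, id_eq, ne_eq,
      Prod.mk.injEq, hσ, EmbeddingLike.apply_eq_iff_eq]


/-- if `Aut(GI(n;j))` has a vertex-transitive subgroup all of whose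
elements respect the fundamental edge-partition, then `GI(n;[k]j)` is vertex-transitive
for every `k ≥ 1`. -/
theorem GI_rep_vt (n t : ℕ) (hn : 3 ≤ n) (ht : 1 ≤ t) (j : Fin t → ℤ)
    (hj : ∀ s, (j s : ZMod n) ≠ 0 ∧ ((2 * j s : ℤ) : ZMod n) ≠ 0)
    (hconn : (GI n t j).Connected) (hvt : IsVertexTransitive (GI n t j))
    (H : Subgroup (Equiv.Perm (Fin t × ZMod n)))
    (hHaut : ∀ π ∈ H, ∀ x y : Fin t × ZMod n,
      (GI n t j).Adj x y ↔ (GI n t j).Adj (π x) (π y))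
    (hHresp : ∀ π ∈ H, RespectsPart n t j (fun x => π x))
    (hHtrans : ∀ x y : Fin t × ZMod n, ∃ π ∈ H, π x = y) :
    ∀ k : ℕ, 1 ≤ k → IsVertexTransitive (GI n (k * t) (rep k t j)) := by
  intro k hk x y
  have ht0 : 0 < t := ht
  obtain ⟨π, hπH, hπeq⟩ := hHtrans (⟨(x.1 : ℕ) % t, Nat.mod_lt _ ht0⟩, x.2)
    (⟨(y.1 : ℕ) % t, Nat.mod_lt _ ht0⟩, y.2)
  have hA : ∀ a b, (GI n t j).Adj a b → (GI n t j).Adj (π a) (π b) :=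
    fun a b h => (hHaut π hπH a b).mp h
  have hA' : ∀ a b, (GI n t j).Adj a b → (GI n t j).Adj (π.symm a) (π.symm b) := by
    intro a b h
    have := (hHaut π hπH (π.symm a) (π.symm b)).mpr
    simp only [Equiv.apply_symm_apply] at this
    exact this h
  have hR : RespectsPart n t j π := hHresp π hπH
  have hR' : RespectsPart n t j π.symm := hHresp π⁻¹ (H.inv_mem hπH)
  set φ₁ := liftIso n t k ht0 j π hA hA' hR hR' with hφ₁
  -- compute φ₁ x
  have hφ₁x : (φ₁ x : Fin (k * t) × ZMod n) =
      (⟨(x.1 : ℕ) / t * t + (y.1 : ℕ) % t, by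
        have := idx_lt (k := k) ht0 x.1 (⟨(y.1 : ℕ) % t, Nat.mod_lt _ ht0⟩ : Fin t)
        simpa using this⟩, y.2) := by
    show liftFun n t k ht0 π x = _
    simp only [liftFun, hπeq]
  set m : Fin (k * t) := ⟨(x.1 : ℕ) / t * t + (y.1 : ℕ) % t, by
        have := idx_lt (k := k) ht0 x.1 (⟨(y.1 : ℕ) % t, Nat.mod_lt _ ht0⟩ : Fin t)
        simpa using this⟩ with hm
  have hmmod : (m : ℕ) % t = (y.1 : ℕ) % t := by
    rw [hm]
    exact mod_helper _ (Nat.mod_lt _ ht0)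
  have hrepm : ∀ s0 : Fin (k * t), rep k t j (Equiv.swap m y.1 s0) = rep k t j s0 := by
    intro s0
    have hrme : rep k t j m = rep k t j y.1 := by
      rw [rep_apply k t j ht0, rep_apply k t j ht0]
      exact congrArg j (Fin.ext hmmod)
    rcases eq_or_ne s0 m with h | h
    · rw [h, Equiv.swap_apply_left, hrme]
    · rcases eq_or_ne s0 y.1 with h2 | h2
      · rw [h2, Equiv.swap_apply_right, hrme]
      · rw [Equiv.swap_apply_of_ne_of_ne h h2]
  set φ₂ := permFstIso n (k * t) (rep k t j) (Equiv.swap m y.1) hrepm with hφ₂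
  refine ⟨φ₁.trans φ₂, ?_⟩
  show φ₂ (φ₁ x) = y
  rw [hφ₁x]
  show (Equiv.swap m y.1 m, y.2) = y
  rw [Equiv.swap_apply_left]
end
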